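/- arXiv:2402.08602 — 5 statements merged into one kernel-verified Lean document; each statement's English description precedes it below -/
import Mathlib

section
/- Let (Tₙ)_{n≥1} be random vectors in ℝ^p and (Wₙ)_{n≥1} random real symmetric positive definite p×p matrices defined on the same probability space, and let θ ∈ ℝ^p. Assume: (i) (multivariate Anscombe condition) for every ε > 0 and every γ ∈ (0,1) there exists δ > 0 such that limsup_{n→∞} ℙ( max_{n′: |n′−n| ≤ δn} ‖T_{n′} − Tₙ‖ ≥ ε·λ_min(Wₙ) ) < γ; (ii) there is a finite constant K such that almost surely κ(Wₙ) := λ_max(Wₙ)/λ_min(Wₙ) ≤ K for all n; (iii) there exist positive reals ρₙ → ∞ and a deterministic real symmetric positive definite matrix W such that ρₙ·Wₙ → W in probability; (iv) Wₙ^{-1}(Tₙ − θ) converges in distribution to the standard p-dimensional Gaussian N_p(0, I_p). Let (Nₙ)_{n≥1} be positive-integer-valued random variables on the same probability space and (rₙ)_{n≥1} an increasing sequence of positive integers with rₙ → ∞ such that Nₙ/rₙ → 1 in probability. Then W_{rₙ}^{-1}(T_{Nₙ} − θ) converges in distribution to N_p(0, I_p). -/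
open MeasureTheory Filter Topology ProbabilityTheory Matrix

/-- The smallest eigenvalue of a real symmetric matrix, via the Rayleigh quotient. -/
noncomputable def lambdaMin {p : ℕ} (M : Matrix (Fin p) (Fin p) ℝ) : ℝ :=
  sInf {r : ℝ | ∃ x : Fin p → ℝ, x ⬝ᵥ x = 1 ∧ r = x ⬝ᵥ M.mulVec x}

/-- The largest eigenvalue of a real symmetric matrix, via the Rayleigh quotient. -/
noncomputable def lambdaMax {p : ℕ} (M : Matrix (Fin p) (Fin p) ℝ) : ℝ :=
  sSup {r : ℝ | ∃ x : Fin p → ℝ, x ⬝ᵥ x = 1 ∧ r = x ⬝ᵥ M.mulVec x}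

/-- The Euclidean norm on `Fin p → ℝ`. -/
noncomputable def euclNorm {p : ℕ} (x : Fin p → ℝ) : ℝ :=
  Real.sqrt (x ⬝ᵥ x)

/-- The standard Gaussian distribution `N_p(0, I_p)` on `ℝ^p`. -/
noncomputable def stdGaussian (p : ℕ) : Measure (Fin p → ℝ) :=
  Measure.pi fun _ => gaussianReal 0 1

/-- Convergence in distribution: the integrals of every bounded continuous function converge. -/
def TendstoInDistribution {Ω : Type*} [MeasurableSpace Ω] {E : Type*}
    [TopologicalSpace E] [MeasurableSpace E] (μ : Measure Ω) (g : ℕ → Ω → E)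
    (ν : Measure E) : Prop :=
  ∀ f : BoundedContinuousFunction E ℝ,
    Tendsto (fun n => ∫ ω, f (g n ω) ∂μ) atTop (𝓝 (∫ x, f x ∂ν))


lemma dotProduct_self_nonneg' {p : ℕ} (x : Fin p → ℝ) : 0 ≤ x ⬝ᵥ x :=
  Finset.sum_nonneg fun _ _ => mul_self_nonneg _

lemma euclNorm_nonneg {p : ℕ} (x : Fin p → ℝ) : 0 ≤ euclNorm x := Real.sqrt_nonneg _

lemma euclNorm_mul_self {p : ℕ} (x : Fin p → ℝ) : euclNorm x * euclNorm x = x ⬝ᵥ x :=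
  Real.mul_self_sqrt (dotProduct_self_nonneg' x)

lemma dotProduct_le_euclNorm {p : ℕ} (x y : Fin p → ℝ) :
    x ⬝ᵥ y ≤ euclNorm x * euclNorm y := by
  have h := Real.sum_mul_le_sqrt_mul_sqrt Finset.univ x y
  simpa [euclNorm, dotProduct, pow_two] using h

lemma norm_le_euclNorm {p : ℕ} (x : Fin p → ℝ) : ‖x‖ ≤ euclNorm x := by
  refine (pi_norm_le_iff_of_nonneg (euclNorm_nonneg x)).2 fun i => ?_
  rw [Real.norm_eq_abs, ← Real.sqrt_mul_self_eq_abs]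
  refine Real.sqrt_le_sqrt ?_
  simpa [dotProduct] using
    Finset.single_le_sum (f := fun j => x j * x j) (fun j _ => mul_self_nonneg _)
      (Finset.mem_univ i)

lemma lambdaMin_mul_euclNorm_le {p : ℕ} {M : Matrix (Fin p) (Fin p) ℝ} (hM : M.PosDef)
    (v : Fin p → ℝ) : lambdaMin M * euclNorm (M⁻¹ *ᵥ v) ≤ euclNorm v := by
  set u := M⁻¹ *ᵥ v with hu
  have hMu : M *ᵥ u = v := by
    rw [hu, Matrix.mulVec_mulVec,
      Matrix.mul_nonsing_inv _ (isUnit_iff_ne_zero.2 hM.det_pos.ne'), Matrix.one_mulVec]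
  have claim1 : lambdaMin M * (u ⬝ᵥ u) ≤ u ⬝ᵥ (M *ᵥ u) := by
    rcases eq_or_ne u 0 with h | h
    · simp [h]
    · have hu2 : 0 < u ⬝ᵥ u :=
        lt_of_le_of_ne (dotProduct_self_nonneg' u)
          (fun e => h (dotProduct_self_eq_zero.1 e.symm))
      set s := Real.sqrt (u ⬝ᵥ u) with hs_def
      have hs : 0 < s := Real.sqrt_pos.2 hu2
      have hss : s * s = u ⬝ᵥ u := Real.mul_self_sqrt hu2.le
      have hx1 : (s⁻¹ • u) ⬝ᵥ (s⁻¹ • u) = 1 := by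
        rw [smul_dotProduct, dotProduct_smul, smul_eq_mul, smul_eq_mul, ← hss]
        field_simp
      have hbdd : BddBelow {r : ℝ | ∃ x : Fin p → ℝ, x ⬝ᵥ x = 1 ∧ r = x ⬝ᵥ M.mulVec x} := by
        refine ⟨0, ?_⟩
        rintro r ⟨y, hy1, rfl⟩
        have hy0 : y ≠ 0 := by rintro rfl; simp at hy1
        have := hM.dotProduct_mulVec_pos hy0
        simpa using this.le
      have h1 : lambdaMin M ≤ (s⁻¹ • u) ⬝ᵥ M *ᵥ (s⁻¹ • u) :=
        csInf_le hbdd ⟨s⁻¹ • u, hx1, rfl⟩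
      have hexp : (s⁻¹ • u) ⬝ᵥ M *ᵥ (s⁻¹ • u) = (u ⬝ᵥ (M *ᵥ u)) / (u ⬝ᵥ u) := by
        rw [Matrix.mulVec_smul, smul_dotProduct, dotProduct_smul,
          smul_eq_mul, smul_eq_mul, ← hss]
        field_simp
        try ring
      rw [hexp] at h1
      exact (le_div_iff₀ hu2).1 h1
  rw [hMu] at claim1
  have claim2 : u ⬝ᵥ v ≤ euclNorm u * euclNorm v := dotProduct_le_euclNorm u v
  have h3 : lambdaMin M * (euclNorm u * euclNorm u) ≤ euclNorm u * euclNorm v := by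
    rw [euclNorm_mul_self]; linarith
  rcases (euclNorm_nonneg u).eq_or_lt with h | h
  · rw [← h, mul_zero]; exact euclNorm_nonneg v
  · nlinarith

lemma continuous_euclNorm {p : ℕ} : Continuous fun x : Fin p → ℝ => euclNorm x := by
  simp only [euclNorm, dotProduct]
  exact Real.continuous_sqrt.comp
    (continuous_finset_sum _ fun i _ => (continuous_apply i).mul (continuous_apply i))

lemma measurable_det {Ω : Type*} [MeasurableSpace Ω] {p : ℕ}
    {A : Ω → Matrix (Fin p) (Fin p) ℝ} (hA : ∀ i j, Measurable fun ω => A ω i j) :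
    Measurable fun ω => (A ω).det := by
  simp only [Matrix.det_apply, Units.smul_def, zsmul_eq_mul]
  exact Finset.measurable_sum _ fun σ _ =>
    measurable_const.mul (Finset.measurable_prod _ fun i _ => hA (σ i) i)

lemma measurable_inv_mulVec {Ω : Type*} [MeasurableSpace Ω] {p : ℕ}
    {A : Ω → Matrix (Fin p) (Fin p) ℝ} {v : Ω → Fin p → ℝ}
    (hA : ∀ i j, Measurable fun ω => A ω i j) (hv : Measurable v) :
    Measurable fun ω => (A ω)⁻¹ *ᵥ v ω := by
  have hadj : ∀ i j, Measurable fun ω => (A ω).adjugate i j := by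
    intro i j
    simp only [Matrix.adjugate_apply]
    refine measurable_det fun k l => ?_
    simp only [Matrix.updateRow_apply]
    by_cases hkj : k = j
    · simp [hkj]
    · simpa [hkj] using hA k l
  have hdet : Measurable fun ω => (A ω).det := measurable_det hA
  have hinv : ∀ i j, Measurable fun ω => (A ω)⁻¹ i j := by
    intro i j
    simp only [Matrix.inv_def, Ring.inverse_eq_inv', Matrix.smul_apply, smul_eq_mul]
    exact hdet.inv.mul (hadj i j)
  refine measurable_pi_lambda _ fun i => ?_
  have : (fun ω => ((A ω)⁻¹ *ᵥ v ω) i) = fun ω => ∑ j, (A ω)⁻¹ i j * v ω j := by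
    funext ω; simp [Matrix.mulVec, dotProduct]
  rw [this]
  exact Finset.measurable_sum _ fun j _ => (hinv i j).mul hv.eval

lemma slutsky_aux {Ω : Type*} [MeasurableSpace Ω] {μ : Measure Ω} [IsProbabilityMeasure μ]
    {p : ℕ} (X D : ℕ → Ω → (Fin p → ℝ)) (hXm : ∀ n, Measurable (X n))
    (hDm : ∀ n, Measurable (D n)) (ν : Measure (Fin p → ℝ)) [IsProbabilityMeasure ν]
    (hX : ∀ f : BoundedContinuousFunction (Fin p → ℝ) ℝ,
      Tendsto (fun n => ∫ ω, f (X n ω) ∂μ) atTop (𝓝 (∫ x, f x ∂ν)))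
    (hD : ∀ ε : ℝ, 0 < ε → Tendsto (fun n => μ {ω | ε ≤ euclNorm (D n ω)}) atTop (𝓝 0))
    (f : BoundedContinuousFunction (Fin p → ℝ) ℝ) :
    Tendsto (fun n => ∫ ω, f (X n ω + D n ω) ∂μ) atTop (𝓝 (∫ x, f x ∂ν)) := by
  have hXam : ∀ n, AEMeasurable (X n) μ := fun n => (hXm n).aemeasurable
  let Pn : ℕ → ProbabilityMeasure (Fin p → ℝ) := fun n =>
    ⟨μ.map (X n), Measure.isProbabilityMeasure_map (hXam n)⟩
  let Pl : ProbabilityMeasure (Fin p → ℝ) := ⟨ν, inferInstance⟩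
  have hPtend : Tendsto Pn atTop (𝓝 Pl) := by
    rw [ProbabilityMeasure.tendsto_iff_forall_integral_tendsto]
    intro g
    have hn : (fun n => ∫ x, g x ∂(Pn n : Measure (Fin p → ℝ))) =
        fun n => ∫ ω, g (X n ω) ∂μ := by
      funext n
      exact integral_map (hXam n) g.continuous.aestronglyMeasurable
    rw [hn]
    exact hX g
  rw [Metric.tendsto_nhds]
  intro ε hε
  set C : ℝ := ‖f‖ + 1 with hC
  have hC0 : 0 < C := by positivity
  have hfC : ‖f‖ ≤ C := by simp only [hC]; linarith
  set η : ℝ := ε / (16 * C) with hη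
  have hη0 : 0 < η := by positivity
  have hηε : 16 * C * η = ε := by rw [hη]; field_simp
  obtain ⟨R, hR0, hRν⟩ : ∃ R : ℝ, 0 < R ∧ ν {x | R ≤ ‖x‖} < ENNReal.ofReal η := by
    have hcl : ∀ k : ℕ, IsClosed {x : Fin p → ℝ | (k : ℝ) ≤ ‖x‖} := fun k =>
      isClosed_le continuous_const continuous_norm
    have hts := tendsto_measure_iInter_atTop (μ := ν)
      (s := fun k : ℕ => {x | (k : ℝ) ≤ ‖x‖})
      (fun k => ((hcl k).measurableSet).nullMeasurableSet)
      (fun k l hkl x hx => le_trans (show (k:ℝ) ≤ (l:ℝ) by exact_mod_cast hkl) hx)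
      ⟨0, measure_ne_top _ _⟩
    have hempty : (⋂ k : ℕ, {x : Fin p → ℝ | (k : ℝ) ≤ ‖x‖}) = ∅ := by
      ext x
      simp only [Set.mem_iInter, Set.mem_setOf_eq, Set.mem_empty_iff_false, iff_false,
        not_forall, not_le]
      obtain ⟨k, hk⟩ := exists_nat_gt ‖x‖
      exact ⟨k, hk⟩
    rw [hempty, measure_empty] at hts
    have hev := (hts.eventually_lt_const (ENNReal.ofReal_pos.2 hη0)).and (eventually_ge_atTop 1)
    obtain ⟨k, hk1, hk2⟩ := hev.exists
    exact ⟨k, lt_of_lt_of_le zero_lt_one (by exact_mod_cast hk2), hk1⟩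
  set F : Set (Fin p → ℝ) := {x | R ≤ ‖x‖} with hF
  have hFclosed : IsClosed F := isClosed_le continuous_const continuous_norm
  have hFmeas : MeasurableSet F := hFclosed.measurableSet
  have hBev : ∀ᶠ n in atTop, μ (X n ⁻¹' F) < ENNReal.ofReal η := by
    have hlims := ProbabilityMeasure.limsup_measure_closed_le_of_tendsto hPtend hFclosed
    have hlt : limsup (fun n => (Pn n : Measure (Fin p → ℝ)) F) atTop < ENNReal.ofReal η :=
      lt_of_le_of_lt hlims hRν
    refine (eventually_lt_of_limsup_lt hlt).mono fun n hn => ?_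
    rwa [show (Pn n : Measure (Fin p → ℝ)) F = μ (X n ⁻¹' F) from
      Measure.map_apply (hXm n) hFmeas] at hn
  obtain ⟨δ₁, hδ₁0, hδ₁⟩ := Metric.uniformContinuousOn_iff.1
    ((isCompact_closedBall (0 : Fin p → ℝ) (R + 1)).uniformContinuousOn_of_continuous
      f.continuous.continuousOn) (ε / 4) (by positivity)
  set δ₀ : ℝ := min δ₁ 1 with hδ₀def
  have hδ₀0 : 0 < δ₀ := lt_min hδ₁0 one_pos
  have hAev : ∀ᶠ n in atTop, μ {ω | δ₀ ≤ euclNorm (D n ω)} < ENNReal.ofReal η :=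
    (hD δ₀ hδ₀0).eventually_lt_const (ENNReal.ofReal_pos.2 hη0)
  have hXev : ∀ᶠ n in atTop, dist (∫ ω, f (X n ω) ∂μ) (∫ x, f x ∂ν) < ε / 4 :=
    Metric.tendsto_nhds.1 (hX f) _ (by positivity)
  filter_upwards [hBev, hAev, hXev] with n hB hA hXd
  set S : Set Ω := {ω | δ₀ ≤ euclNorm (D n ω)} ∪ (X n ⁻¹' F) with hSdef
  have hAm : MeasurableSet {ω | δ₀ ≤ euclNorm (D n ω)} :=
    measurableSet_le measurable_const (continuous_euclNorm.measurable.comp (hDm n))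
  have hSm : MeasurableSet S := hAm.union ((hXm n) hFmeas)
  have hμS : (μ S).toReal ≤ 2 * η := by
    have h2 : μ S ≤ ENNReal.ofReal (2 * η) := by
      rw [two_mul, ENNReal.ofReal_add hη0.le hη0.le]
      exact le_trans (measure_union_le _ _) (add_le_add hA.le hB.le)
    exact ENNReal.toReal_le_of_le_ofReal (by positivity) h2
  have hintX : Integrable (fun ω => f (X n ω)) μ :=
    (integrable_const ‖f‖).mono' (f.continuous.measurable.comp (hXm n)).aestronglyMeasurable
      (ae_of_all _ fun ω => by simpa using f.norm_coe_le_norm (X n ω))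
  have hintZ : Integrable (fun ω => f (X n ω + D n ω)) μ :=
    (integrable_const ‖f‖).mono'
      (f.continuous.measurable.comp ((hXm n).add (hDm n))).aestronglyMeasurable
      (ae_of_all _ fun ω => by simpa using f.norm_coe_le_norm (X n ω + D n ω))
  have hpt : ∀ ω, |f (X n ω + D n ω) - f (X n ω)| ≤
      ε / 4 + S.indicator (fun _ => 2 * ‖f‖) ω := by
    intro ω
    by_cases hω : ω ∈ S
    · rw [Set.indicator_of_mem hω]
      have hd := f.dist_le_two_norm (X n ω + D n ω) (X n ω)
      rw [Real.dist_eq] at hd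
      linarith
    · rw [Set.indicator_of_notMem hω, add_zero]
      rw [hSdef, Set.mem_union] at hω
      push_neg at hω
      obtain ⟨h1, h2⟩ := hω
      simp only [Set.mem_setOf_eq, not_le] at h1
      have h2' : ‖X n ω‖ < R := by
        simpa [hF, Set.mem_preimage, Set.mem_setOf_eq, not_le] using h2
      have hDn : ‖D n ω‖ < δ₀ := lt_of_le_of_lt (norm_le_euclNorm _) h1
      have hXmem : X n ω ∈ Metric.closedBall (0 : Fin p → ℝ) (R + 1) := by
        rw [Metric.mem_closedBall, dist_zero_right]
        linarith
      have hZmem : X n ω + D n ω ∈ Metric.closedBall (0 : Fin p → ℝ) (R + 1) := by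
        rw [Metric.mem_closedBall, dist_zero_right]
        have hd1 : δ₀ ≤ 1 := min_le_right _ _
        have hd2 := norm_add_le (X n ω) (D n ω)
        linarith
      have hdist : dist (X n ω + D n ω) (X n ω) < δ₁ := by
        rw [dist_eq_norm, add_sub_cancel_left]
        exact lt_of_lt_of_le hDn (min_le_left _ _)
      have hfd := hδ₁ _ hZmem _ hXmem hdist
      rw [Real.dist_eq] at hfd
      linarith
  have hkey : |(∫ ω, f (X n ω + D n ω) ∂μ) - ∫ ω, f (X n ω) ∂μ| ≤
      ε / 4 + 2 * ‖f‖ * (μ S).toReal := by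
    rw [← integral_sub hintZ hintX]
    have h1 : |∫ ω, (f (X n ω + D n ω) - f (X n ω)) ∂μ| ≤
        ∫ ω, |f (X n ω + D n ω) - f (X n ω)| ∂μ := by
      simpa [Real.norm_eq_abs] using
        norm_integral_le_integral_norm (fun ω => f (X n ω + D n ω) - f (X n ω)) (μ := μ)
    refine h1.trans ?_
    have h2 : ∫ ω, |f (X n ω + D n ω) - f (X n ω)| ∂μ ≤
        ∫ ω, (ε / 4 + S.indicator (fun _ => 2 * ‖f‖) ω) ∂μ := by
      refine integral_mono (hintZ.sub hintX).abs ?_ hpt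
      exact (integrable_const _).add ((integrable_const _).indicator hSm)
    refine h2.trans ?_
    rw [integral_add (integrable_const _) ((integrable_const _).indicator hSm),
      integral_const, integral_indicator_const _ hSm]
    simp only [measureReal_def, measure_univ, ENNReal.toReal_one, one_smul, smul_eq_mul]
    ring_nf
    nlinarith [ENNReal.toReal_nonneg (a := μ S)]
  have hterm : 2 * ‖f‖ * (μ S).toReal ≤ ε / 4 := by
    nlinarith [ENNReal.toReal_nonneg (a := μ S), norm_nonneg f]
  refine lt_of_le_of_lt (dist_triangle _ (∫ ω, f (X n ω) ∂μ) _) ?_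
  rw [Real.dist_eq]
  have : |(∫ ω, f (X n ω + D n ω) ∂μ) - ∫ ω, f (X n ω) ∂μ| ≤ ε / 4 + ε / 4 := by linarith
  linarith [hXd, this]

/-- Multivariate Anscombe theorem for randomly indexed sequences (paper's Theorem). -/
theorem multivariate_anscombe
    {Ω : Type*} [MeasurableSpace Ω] {μ : Measure Ω} [IsProbabilityMeasure μ]
    {p : ℕ} (T : ℕ → Ω → (Fin p → ℝ)) (W : ℕ → Ω → Matrix (Fin p) (Fin p) ℝ)
    (θ : Fin p → ℝ)
    (hTmeas : ∀ n, Measurable (T n)) (hWmeas : ∀ n i j, Measurable fun ω => W n ω i j)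
    (hWpos : ∀ n ω, (W n ω).PosDef) (hWsymm : ∀ n ω, (W n ω).IsSymm)
    -- (i) multivariate Anscombe condition
    (hAnscombe : ∀ ε : ℝ, 0 < ε → ∀ γ : ℝ, 0 < γ → γ < 1 → ∃ δ : ℝ, 0 < δ ∧
      limsup (fun n : ℕ =>
          μ {ω | ∃ n' : ℕ, |(n' : ℝ) - (n : ℝ)| ≤ δ * n ∧
              ε * lambdaMin (W n ω) ≤ euclNorm (T n' ω - T n ω)}) atTop
        < ENNReal.ofReal γ)
    -- (ii) almost surely bounded condition numbers
    (K : ℝ) (hK : ∀ᵐ ω ∂μ, ∀ n, lambdaMax (W n ω) / lambdaMin (W n ω) ≤ K)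
    -- (iii) ρₙ Wₙ → W in probability, ρₙ → ∞, W deterministic positive definite
    (ρ : ℕ → ℝ) (hρpos : ∀ n, 0 < ρ n) (hρ : Tendsto ρ atTop atTop)
    (Wlim : Matrix (Fin p) (Fin p) ℝ) (hWlimpos : Wlim.PosDef) (hWlimsymm : Wlim.IsSymm)
    (hWlim : ∀ i j, TendstoInMeasure μ (fun n ω => ρ n * W n ω i j) atTop
      (fun _ => Wlim i j))
    -- (iv) Wₙ⁻¹(Tₙ − θ) converges in distribution to N_p(0, I_p)
    (hCLT : TendstoInDistribution μ (fun n ω => (W n ω)⁻¹.mulVec (T n ω - θ))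
      (stdGaussian p))
    -- random indices
    (N : ℕ → Ω → ℕ) (hNmeas : ∀ n, Measurable (N n)) (hNpos : ∀ n ω, 0 < N n ω)
    (r : ℕ → ℕ) (hrmono : Monotone r) (hrpos : ∀ n, 0 < r n)
    (hr : Tendsto r atTop atTop)
    (hNr : TendstoInMeasure μ (fun n ω => (N n ω : ℝ) / (r n : ℝ)) atTop (fun _ => 1)) :
    TendstoInDistribution μ (fun n ω => (W (r n) ω)⁻¹.mulVec (T (N n ω) ω - θ))
      (stdGaussian p) := by
  intro f
  show Tendsto (fun n => ∫ ω, f ((W (r n) ω)⁻¹.mulVec (T (N n ω) ω - θ)) ∂μ) atTop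
    (𝓝 (∫ x, f x ∂stdGaussian p))
  haveI hνprob : IsProbabilityMeasure (stdGaussian p) := by
    unfold _root_.stdGaussian; infer_instance
  have hTN : ∀ n, Measurable fun ω => T (N n ω) ω := by
    intro n
    have hg : Measurable fun q : Ω × ℕ => T q.2 q.1 :=
      measurable_from_prod_countable_left fun k => hTmeas k
    exact hg.comp (measurable_id.prodMk (hNmeas n))
  set X : ℕ → Ω → Fin p → ℝ := fun n ω => (W (r n) ω)⁻¹ *ᵥ (T (r n) ω - θ) with hXdef
  set D : ℕ → Ω → Fin p → ℝ := fun n ω => (W (r n) ω)⁻¹ *ᵥ (T (N n ω) ω - T (r n) ω)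
    with hDdef
  have hXm : ∀ n, Measurable (X n) := fun n =>
    measurable_inv_mulVec (hWmeas (r n)) ((hTmeas (r n)).sub measurable_const)
  have hDm : ∀ n, Measurable (D n) := fun n =>
    measurable_inv_mulVec (hWmeas (r n)) ((hTN n).sub (hTmeas (r n)))
  have hgoal_eq : ∀ n ω, (W (r n) ω)⁻¹.mulVec (T (N n ω) ω - θ) = X n ω + D n ω := by
    intro n ω
    simp only [hXdef, hDdef, ← Matrix.mulVec_add]
    congr 1
    abel
  have hXconv : ∀ g : BoundedContinuousFunction (Fin p → ℝ) ℝ,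
      Tendsto (fun n => ∫ ω, g (X n ω) ∂μ) atTop (𝓝 (∫ x, g x ∂stdGaussian p)) :=
    fun g => (hCLT g).comp hr
  have hDto0 : ∀ ε : ℝ, 0 < ε →
      Tendsto (fun n => μ {ω | ε ≤ euclNorm (D n ω)}) atTop (𝓝 0) := by
    intro ε hε
    rw [ENNReal.tendsto_nhds_zero]
    intro c hc
    obtain ⟨γ, hγ0, hγ1, hγc⟩ : ∃ γ : ℝ, 0 < γ ∧ γ < 1 ∧ ENNReal.ofReal γ ≤ c / 2 := by
      rcases eq_or_ne c ⊤ with rfl | hct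
      · refine ⟨1/2, by norm_num, by norm_num, ?_⟩
        rw [ENNReal.top_div_of_ne_top (by simp)]
        exact le_top
      · have h20 : c / 2 ≠ 0 := by
          simp [ENNReal.div_eq_zero_iff, hc.ne']
        have h2t : c / 2 ≠ ⊤ := by
          simp [ENNReal.div_eq_top, hct]
        have hpos : 0 < (c / 2).toReal := ENNReal.toReal_pos h20 h2t
        refine ⟨min (1/2) ((c/2).toReal), lt_min (by norm_num) hpos,
          lt_of_le_of_lt (min_le_left _ _) (by norm_num), ?_⟩
        calc ENNReal.ofReal (min (1/2) ((c/2).toReal))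
            ≤ ENNReal.ofReal ((c/2).toReal) := ENNReal.ofReal_le_ofReal (min_le_right _ _)
          _ = c / 2 := ENNReal.ofReal_toReal h2t
    obtain ⟨δ, hδ, hlim⟩ := hAnscombe ε hε γ hγ0 hγ1
    have h1' := hr.eventually (eventually_lt_of_limsup_lt hlim)
    have h2 : ∀ᶠ n in atTop,
        μ {ω | δ ≤ dist ((N n ω : ℝ) / (r n : ℝ)) ((fun _ : Ω => (1:ℝ)) ω)}
          < ENNReal.ofReal γ :=
      (tendstoInMeasure_iff_dist.1 hNr δ hδ).eventually_lt_const (ENNReal.ofReal_pos.2 hγ0)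
    filter_upwards [h1', h2] with n hb hn
    have hsub : {ω | ε ≤ euclNorm (D n ω)} ⊆
        {ω | ∃ n' : ℕ, |(n' : ℝ) - ((r n : ℕ) : ℝ)| ≤ δ * (r n : ℕ) ∧
            ε * lambdaMin (W (r n) ω) ≤ euclNorm (T n' ω - T (r n) ω)} ∪
        {ω | δ ≤ dist ((N n ω : ℝ) / (r n : ℝ)) ((fun _ : Ω => (1:ℝ)) ω)} := by
      intro ω hω
      simp only [Set.mem_setOf_eq] at hω
      rw [Set.mem_union]
      by_contra hcon
      push_neg at hcon
      obtain ⟨hB, hDev⟩ := hcon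
      simp only [Set.mem_setOf_eq, not_exists, not_and, not_le] at hB hDev
      have hrn : (0:ℝ) < (r n : ℝ) := by exact_mod_cast hrpos n
      have hND : |(N n ω : ℝ) - (r n : ℝ)| ≤ δ * (r n : ℝ) := by
        have he : ((N n ω : ℝ) / (r n : ℝ) - 1) = ((N n ω : ℝ) - (r n : ℝ)) / (r n : ℝ) := by
          field_simp
        rw [Real.dist_eq, he, abs_div, abs_of_pos hrn, div_lt_iff₀ hrn] at hDev
        linarith
      have hlt := hB (N n ω) hND
      have hkey := lambdaMin_mul_euclNorm_le (hWpos (r n) ω) (T (N n ω) ω - T (r n) ω)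
      have hD_eq : D n ω = (W (r n) ω)⁻¹ *ᵥ (T (N n ω) ω - T (r n) ω) := by
        rw [hDdef]
      rw [← hD_eq] at hkey
      have hεN := euclNorm_nonneg (T (N n ω) ω - T (r n) ω)
      have hDN := euclNorm_nonneg (D n ω)
      have hlam : 0 < lambdaMin (W (r n) ω) := by nlinarith
      have hmul := mul_le_mul_of_nonneg_left hω hlam.le
      nlinarith
    refine le_trans (measure_mono hsub) (le_trans (measure_union_le _ _) ?_)
    calc μ _ + μ _ ≤ ENNReal.ofReal γ + ENNReal.ofReal γ := add_le_add hb.le hn.le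
      _ ≤ c/2 + c/2 := add_le_add hγc hγc
      _ = c := ENNReal.add_halves c
  have hfinal := slutsky_aux X D hXm hDm (stdGaussian p) hXconv hDto0 f
  have heq : (fun n => ∫ ω, f ((W (r n) ω)⁻¹.mulVec (T (N n ω) ω - θ)) ∂μ) =
      fun n => ∫ ω, f (X n ω + D n ω) ∂μ := by
    funext n
    congr 1
    funext ω
    rw [hgoal_eq]
  rw [heq]
  exact hfinal
end

section
/- Let Σ be a real symmetric positive definite p×p matrix, H a real symmetric p×p matrix, and q > 0 a real number. For a real symmetric positive semidefinite matrix M with spectral decomposition M = U·diag(λ₁,…,λ_p)·Uᵀ (U orthogonal), define M^q = U·diag(λ₁^q,…,λ_p^q)·Uᵀ. Then tr((Σ + εH)^q) − tr(Σ^q) = ε·q·tr(Σ^{q−1}·H) + o(ε) as ε → 0; that is, the function ε ↦ tr((Σ + εH)^q), defined for all ε small enough that Σ + εH is positive definite, is differentiable at ε = 0 with derivative q·tr(Σ^{q−1}·H). -/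
open Matrix

/-- Real power of a symmetric matrix, defined through the spectral decomposition:
if `M = U·diag(λ₁,…,λ_p)·Uᵀ` then `M^q = U·diag(λ₁^q,…,λ_p^q)·Uᵀ`. -/
noncomputable def hermRpow {p : ℕ} (M : Matrix (Fin p) (Fin p) ℝ) (q : ℝ) :
    Matrix (Fin p) (Fin p) ℝ :=
  if hM : M.IsHermitian then
    (hM.eigenvectorUnitary : Matrix (Fin p) (Fin p) ℝ) *
      Matrix.diagonal (fun i => hM.eigenvalues i ^ q) *
      ((hM.eigenvectorUnitary : Matrix (Fin p) (Fin p) ℝ))ᵀ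
  else 0

namespace TraceRpowAux

open Polynomial

variable {p : ℕ}

lemma isHerm_of_isSymm {M : Matrix (Fin p) (Fin p) ℝ} (h : M.IsSymm) : M.IsHermitian := by
  rw [Matrix.IsHermitian, Matrix.conjTranspose_eq_transpose_of_trivial]; exact h

lemma conjPowAux {V : Matrix (Fin p) (Fin p) ℝ} (hV : Vᵀ * V = 1) (hV' : V * Vᵀ = 1)
    (d : Fin p → ℝ) (n : ℕ) :
    (V * Matrix.diagonal d * Vᵀ) ^ n = V * Matrix.diagonal (fun i => d i ^ n) * Vᵀ := by
  induction n with
  | zero =>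
    have : (fun i => d i ^ 0) = fun _ : Fin p => (1 : ℝ) := by funext i; simp
    rw [pow_zero, this, Matrix.diagonal_one, Matrix.mul_one, hV']
  | succ n ih =>
    rw [pow_succ, ih]
    calc (V * Matrix.diagonal (fun i => d i ^ n) * Vᵀ) * (V * Matrix.diagonal d * Vᵀ)
        = V * (Matrix.diagonal (fun i => d i ^ n) * ((Vᵀ * V) *
            (Matrix.diagonal d * Vᵀ))) := by simp only [Matrix.mul_assoc]
      _ = V * Matrix.diagonal (fun i => d i ^ (n + 1)) * Vᵀ := by
          have hd : (fun i => d i ^ n * d i) = fun i : Fin p => d i ^ (n + 1) := by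
            funext i; rw [pow_succ]
          rw [hV, Matrix.one_mul, ← Matrix.mul_assoc (Matrix.diagonal _),
            Matrix.diagonal_mul_diagonal, hd, ← Matrix.mul_assoc]

section Spec
variable {M : Matrix (Fin p) (Fin p) ℝ} (hM : M.IsHermitian)

local notation "U" => (hM.eigenvectorUnitary : Matrix (Fin p) (Fin p) ℝ)

lemma myUtU : Uᵀ * U = 1 := by
  have := hM.eigenvectorUnitary.2
  rw [Matrix.mem_unitaryGroup_iff'] at this
  rw [← Matrix.conjTranspose_eq_transpose_of_trivial]; exact this

lemma myUUt : U * Uᵀ = 1 := by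
  have := hM.eigenvectorUnitary.2
  rw [Matrix.mem_unitaryGroup_iff] at this
  rw [← Matrix.conjTranspose_eq_transpose_of_trivial]; exact this

lemma mySpec : M = U * Matrix.diagonal hM.eigenvalues * Uᵀ := by
  conv_lhs => rw [hM.spectral_theorem]
  rw [← Matrix.conjTranspose_eq_transpose_of_trivial]; congr 1

lemma pow_spec (n : ℕ) : M ^ n = U * Matrix.diagonal (fun i => hM.eigenvalues i ^ n) * Uᵀ :=
  (congrArg (fun A => A ^ n) (mySpec hM)).trans (conjPowAux (myUtU hM) (myUUt hM) _ n)

lemma aeval_spec (P : ℝ[X]) :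
    Polynomial.aeval M P = U * Matrix.diagonal (fun i => P.eval (hM.eigenvalues i)) * Uᵀ := by
  induction P using Polynomial.induction_on' with
  | add f g hf hg =>
    rw [map_add, hf, hg]
    have : (fun i => (f + g).eval (hM.eigenvalues i))
        = fun i => f.eval (hM.eigenvalues i) + g.eval (hM.eigenvalues i) := by
      funext i; simp
    rw [this, ← Matrix.diagonal_add, Matrix.mul_add, Matrix.add_mul]
  | monomial n a =>
    rw [Polynomial.aeval_monomial, pow_spec hM,
      Algebra.algebraMap_eq_smul_one (A := Matrix (Fin p) (Fin p) ℝ) a,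
      smul_mul_assoc, one_mul]
    rw [show (fun i => Polynomial.eval (hM.eigenvalues i) (Polynomial.monomial n a))
        = a • fun i => hM.eigenvalues i ^ n by funext i; simp [Polynomial.eval_monomial],
      Matrix.diagonal_smul, Matrix.mul_smul, Matrix.smul_mul]

lemma trace_diag_mul (d : Fin p → ℝ) (A : Matrix (Fin p) (Fin p) ℝ) :
    Matrix.trace (Matrix.diagonal d * A) = ∑ i, d i * A i i := by
  simp [Matrix.trace, Matrix.diag, Matrix.diagonal_mul]

lemma trace_conj_diag (d : Fin p → ℝ) (A : Matrix (Fin p) (Fin p) ℝ) :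
    Matrix.trace (U * Matrix.diagonal d * Uᵀ * A) = ∑ i, d i * (Uᵀ * A * U) i i := by
  rw [Matrix.mul_assoc, Matrix.mul_assoc, Matrix.trace_mul_comm, Matrix.mul_assoc,
    trace_diag_mul]

lemma trace_conj_diag' (d : Fin p → ℝ) :
    Matrix.trace (U * Matrix.diagonal d * Uᵀ) = ∑ i, d i := by
  rw [Matrix.trace_mul_comm, ← Matrix.mul_assoc, myUtU hM, Matrix.one_mul, Matrix.trace_diagonal]

lemma col_sq_sum (j : Fin p) : ∑ k, (U k j) ^ 2 = 1 := by
  have h := congrFun (congrFun (myUtU hM) j) j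
  simp only [Matrix.mul_apply, Matrix.transpose_apply, Matrix.one_apply_eq] at h
  rw [← h]; congr 1; funext k; ring

lemma entry_abs_le (i j : Fin p) : |U i j| ≤ 1 := by
  have h2 : (U i j) ^ 2 ≤ 1 := by
    rw [← col_sq_sum hM j]
    exact Finset.single_le_sum (f := fun k => (U k j) ^ 2) (fun k _ => sq_nonneg _)
      (Finset.mem_univ i)
  nlinarith [sq_nonneg (|U i j| - 1), sq_abs (U i j), abs_nonneg (U i j)]

lemma quad_eq (x : Fin p → ℝ) :
    x ⬝ᵥ (M *ᵥ x) = ∑ i, hM.eigenvalues i * ((Uᵀ *ᵥ x) i) ^ 2 := by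
  have h0 := congrArg (fun A => x ⬝ᵥ (A *ᵥ x)) (mySpec hM)
  rw [h0]
  rw [← Matrix.mulVec_mulVec, ← Matrix.mulVec_mulVec, Matrix.dotProduct_mulVec x U,
    ← Matrix.mulVec_transpose]
  simp [dotProduct, Matrix.mulVec_diagonal]
  congr 1; funext i; ring

lemma dot_self_eq (x : Fin p → ℝ) : x ⬝ᵥ x = ∑ i, ((Uᵀ *ᵥ x) i) ^ 2 := by
  have : (Uᵀ *ᵥ x) ⬝ᵥ (Uᵀ *ᵥ x) = x ⬝ᵥ x := by
    rw [Matrix.dotProduct_mulVec, ← Matrix.mulVec_transpose, Matrix.mulVec_mulVec,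
      Matrix.transpose_transpose, myUUt hM, Matrix.one_mulVec]
  rw [← this]
  simp [dotProduct]; congr 1; funext i; ring

lemma le_quad {c : ℝ} (hc : ∀ i, c ≤ hM.eigenvalues i) (x : Fin p → ℝ) :
    c * (x ⬝ᵥ x) ≤ x ⬝ᵥ (M *ᵥ x) := by
  rw [quad_eq hM, dot_self_eq hM, Finset.mul_sum]
  exact Finset.sum_le_sum fun i _ => mul_le_mul_of_nonneg_right (hc i) (sq_nonneg _)

lemma quad_le {c : ℝ} (hc : ∀ i, hM.eigenvalues i ≤ c) (x : Fin p → ℝ) :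
    x ⬝ᵥ (M *ᵥ x) ≤ c * (x ⬝ᵥ x) := by
  rw [quad_eq hM, dot_self_eq hM, Finset.mul_sum]
  exact Finset.sum_le_sum fun i _ => mul_le_mul_of_nonneg_right (hc i) (sq_nonneg _)

lemma eig_eq (j : Fin p) :
    hM.eigenvalues j = (fun i => U i j) ⬝ᵥ (M *ᵥ fun i => U i j) := by
  have h := hM.eigenvalues_eq j
  simpa [Matrix.IsHermitian.eigenvectorUnitary_apply] using h

lemma conj_diag_entry (A : Matrix (Fin p) (Fin p) ℝ) (i : Fin p) :
    (Uᵀ * A * U) i i = (fun k => U k i) ⬝ᵥ (A *ᵥ fun k => U k i) := by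
  simp only [Matrix.mul_apply, Matrix.transpose_apply, dotProduct, Matrix.mulVec,
    dotProduct, Finset.sum_mul, Finset.mul_sum]
  rw [Finset.sum_comm]
  refine Finset.sum_congr rfl fun j _ => Finset.sum_congr rfl fun k _ => by ring

lemma hermRpow_eq (r : ℝ) :
    hermRpow M r = U * Matrix.diagonal (fun i => hM.eigenvalues i ^ r) * Uᵀ := by
  simp only [hermRpow, dif_pos hM]

lemma trace_hermRpow (r : ℝ) :
    Matrix.trace (hermRpow M r) = ∑ i, hM.eigenvalues i ^ r := by
  rw [hermRpow_eq hM, trace_conj_diag' hM]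

end Spec

lemma quad_abs_le (H : Matrix (Fin p) (Fin p) ℝ) (x : Fin p → ℝ) (hx : ∀ i, |x i| ≤ 1) :
    |x ⬝ᵥ (H *ᵥ x)| ≤ ∑ j, ∑ k, |H j k| := by
  rw [dotProduct]
  refine (Finset.abs_sum_le_sum_abs _ _).trans ?_
  refine Finset.sum_le_sum fun j _ => ?_
  rw [Matrix.mulVec, dotProduct, Finset.mul_sum]
  refine (Finset.abs_sum_le_sum_abs _ _).trans ?_
  refine Finset.sum_le_sum fun k _ => ?_
  rw [abs_mul, abs_mul]
  calc |x j| * (|H j k| * |x k|) ≤ 1 * (|H j k| * 1) := by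
        apply mul_le_mul (hx j) ?_ (by positivity) zero_le_one
        exact mul_le_mul_of_nonneg_left (hx k) (abs_nonneg _)
    _ = |H j k| := by ring

attribute [local instance] Matrix.linftyOpNormedAddCommGroup Matrix.linftyOpNormedRing
  Matrix.linftyOpNormedAlgebra

lemma hasDerivAt_affine (S H : Matrix (Fin p) (Fin p) ℝ) (e : ℝ) :
    HasDerivAt (fun ε : ℝ => S + ε • H) H e := by
  exact (((hasDerivAt_id e).smul_const H).const_add S).congr_deriv (one_smul ℝ H)

lemma hasDerivAt_matpow (S H : Matrix (Fin p) (Fin p) ℝ) (n : ℕ) (e : ℝ) :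
    HasDerivAt (fun ε : ℝ => (S + ε • H) ^ n)
      (∑ k ∈ Finset.range n, (S + e • H) ^ k * H * (S + e • H) ^ (n - 1 - k)) e := by
  induction n with
  | zero =>
    simp only [pow_zero, Finset.range_zero, Finset.sum_empty]
    exact hasDerivAt_const e (1 : Matrix (Fin p) (Fin p) ℝ)
  | succ n ih =>
    have h : HasDerivAt (fun ε : ℝ => (S + ε • H) ^ n * (S + ε • H)) _ e :=
      ih.mul (hasDerivAt_affine S H e)
    have heq : (fun ε : ℝ => (S + ε • H) ^ n * (S + ε • H)) = fun ε => (S + ε • H) ^ (n + 1) := by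
      funext ε; rw [← pow_succ]
    rw [heq] at h
    convert h using 1
    rw [Finset.sum_range_succ, Finset.sum_mul]
    congr 1
    · refine Finset.sum_congr rfl fun k hk => ?_
      rw [Finset.mem_range] at hk
      rw [show n + 1 - 1 - k = (n - 1 - k) + 1 by omega, pow_succ, ← Matrix.mul_assoc]
    · rw [show n + 1 - 1 - n = 0 by omega, pow_zero, Matrix.mul_one]

lemma hasDerivAt_trace_pow (S H : Matrix (Fin p) (Fin p) ℝ) (n : ℕ) (e : ℝ) :
    HasDerivAt (fun ε : ℝ => Matrix.trace ((S + ε • H) ^ n))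
      ((n : ℝ) * Matrix.trace ((S + e • H) ^ (n - 1) * H)) e := by
  classical
  let L : Matrix (Fin p) (Fin p) ℝ →L[ℝ] ℝ :=
    LinearMap.toContinuousLinearMap (Matrix.traceLinearMap (Fin p) ℝ ℝ)
  have h := L.hasFDerivAt.comp_hasDerivAt e (hasDerivAt_matpow S H n e)
  have hL : ∀ A : Matrix (Fin p) (Fin p) ℝ, L A = Matrix.trace A := fun A => rfl
  have hval : L (∑ k ∈ Finset.range n, (S + e • H) ^ k * H * (S + e • H) ^ (n - 1 - k))
      = (n : ℝ) * Matrix.trace ((S + e • H) ^ (n - 1) * H) := by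
    rw [hL, Matrix.trace_sum]
    have : ∀ k ∈ Finset.range n,
        Matrix.trace ((S + e • H) ^ k * H * (S + e • H) ^ (n - 1 - k))
          = Matrix.trace ((S + e • H) ^ (n - 1) * H) := by
      intro k hk
      rw [Finset.mem_range] at hk
      rw [Matrix.trace_mul_cycle, ← pow_add,
        show n - 1 - k + k = n - 1 by omega]
    rw [Finset.sum_congr rfl this, Finset.sum_const, Finset.card_range, nsmul_eq_mul]
  exact h.congr_deriv hval

lemma hasDerivAt_trace_aeval (S H : Matrix (Fin p) (Fin p) ℝ) (P : ℝ[X]) (e : ℝ) :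
    HasDerivAt (fun ε : ℝ => Matrix.trace (Polynomial.aeval (S + ε • H) P))
      (Matrix.trace (Polynomial.aeval (S + e • H) (Polynomial.derivative P) * H)) e := by
  induction P using Polynomial.induction_on' with
  | add f g hf hg =>
    have h : HasDerivAt (fun ε : ℝ => Matrix.trace (Polynomial.aeval (S + ε • H) f)
        + Matrix.trace (Polynomial.aeval (S + ε • H) g)) _ e := hf.add hg
    have h1 : (fun ε : ℝ => Matrix.trace (Polynomial.aeval (S + ε • H) f)
        + Matrix.trace (Polynomial.aeval (S + ε • H) g))
        = fun ε : ℝ => Matrix.trace (Polynomial.aeval (S + ε • H) (f + g)) := by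
      funext ε; rw [map_add, Matrix.trace_add]
    rw [h1] at h
    refine h.congr_deriv ?_
    rw [map_add, map_add, Matrix.add_mul, Matrix.trace_add]
  | monomial n a =>
    have h := (hasDerivAt_trace_pow S H n e).const_mul a
    have h1 : (fun ε : ℝ => a * Matrix.trace ((S + ε • H) ^ n))
        = fun ε : ℝ => Matrix.trace (Polynomial.aeval (S + ε • H) (Polynomial.monomial n a)) := by
      funext ε
      rw [Polynomial.aeval_monomial, Algebra.algebraMap_eq_smul_one, smul_mul_assoc, one_mul,
        Matrix.trace_smul, smul_eq_mul]
    rw [h1] at h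
    refine h.congr_deriv ?_
    rw [Polynomial.derivative_monomial, Polynomial.aeval_monomial,
      Algebra.algebraMap_eq_smul_one, smul_mul_assoc, one_mul, Matrix.smul_mul,
      Matrix.trace_smul, smul_eq_mul]
    ring

lemma exists_antideriv (Q : Polynomial ℝ) : ∃ P : Polynomial ℝ, Polynomial.derivative P = Q := by
  refine ⟨Q.sum fun n c => Polynomial.C (c / (n + 1)) * Polynomial.X ^ (n + 1), ?_⟩
  rw [Polynomial.sum, map_sum]
  conv_rhs => rw [← Polynomial.sum_C_mul_X_pow_eq Q, Polynomial.sum]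
  refine Finset.sum_congr rfl fun n _ => ?_
  rw [Polynomial.derivative_C_mul_X_pow]
  have h1 : ((n : ℝ) + 1) ≠ 0 := by positivity
  have : (Q.coeff n / ((n : ℝ) + 1)) * ((n + 1 : ℕ) : ℝ) = Q.coeff n := by
    push_cast; field_simp
  rw [show (n + 1) - 1 = n from rfl, this]

end TraceRpowAux

open TraceRpowAux Polynomial in
/-- First-order trace expansion of `ε ↦ tr((Σ + εH)^q)` at `ε = 0` for a real
exponent `q > 0`: the derivative is `q·tr(Σ^{q−1}·H)`. -/
theorem trace_rpow_gateaux_deriv {p : ℕ} (S H : Matrix (Fin p) (Fin p) ℝ)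
    (hS : S.PosDef) (hH : H.IsSymm) (q : ℝ) (hq : 0 < q) :
    HasDerivAt (fun ε : ℝ => Matrix.trace (hermRpow (S + ε • H) q))
      (q * Matrix.trace (hermRpow S (q - 1) * H)) 0 := by
  classical
  rcases Nat.eq_zero_or_pos p with hp | hp
  · subst hp
    have hf : (fun ε : ℝ => Matrix.trace (hermRpow (S + ε • H) q)) = fun _ => (0 : ℝ) := by
      funext ε
      simp [Matrix.trace, Finset.univ_eq_empty]
    have hv : q * Matrix.trace (hermRpow S (q - 1) * H) = 0 := by
      simp [Matrix.trace, Finset.univ_eq_empty]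
    rw [hf, hv]
    exact hasDerivAt_const 0 0
  haveI : Nonempty (Fin p) := Fin.pos_iff_nonempty.mp hp
  -- Hermitian facts
  have hHh : H.IsHermitian := isHerm_of_isSymm hH
  have hMe : ∀ ε : ℝ, (S + ε • H).IsHermitian := by
    intro ε
    refine hS.1.add (isHerm_of_isSymm ?_)
    rw [Matrix.IsSymm, Matrix.transpose_smul, hH]
  -- eigenvalue bounds
  set m : ℝ := Finset.univ.inf' Finset.univ_nonempty hS.1.eigenvalues with hm_def
  set Mx : ℝ := Finset.univ.sup' Finset.univ_nonempty hS.1.eigenvalues with hMx_def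
  have hm : 0 < m := by
    rw [hm_def, Finset.lt_inf'_iff]
    exact fun i _ => hS.eigenvalues_pos i
  have hmMx : m ≤ Mx := by
    obtain ⟨i⟩ := (inferInstance : Nonempty (Fin p))
    exact le_trans (Finset.inf'_le _ (Finset.mem_univ i)) (Finset.le_sup' _ (Finset.mem_univ i))
  set CH : ℝ := ∑ j, ∑ k, |H j k| with hCH_def
  have hCH : 0 ≤ CH := Finset.sum_nonneg fun j _ => Finset.sum_nonneg fun k _ => abs_nonneg _
  set δ : ℝ := m / (2 * (CH + 1)) with hδ_def
  have hδ : 0 < δ := by positivity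
  have hδCH : δ * (CH + 1) = m / 2 := by
    rw [hδ_def]; field_simp
  set a : ℝ := m / 2 with ha_def
  set b : ℝ := Mx + m / 2 with hb_def
  have ha : 0 < a := by positivity
  have hab : a ≤ b := by
    rw [ha_def, hb_def]; nlinarith
  -- eigenvalues of S + εH lie in [a, b] for ε in the ball
  have heig : ∀ ε ∈ Metric.ball (0 : ℝ) δ, ∀ j, (hMe ε).eigenvalues j ∈ Set.Icc a b := by
    intro ε hε j
    have hεδ : |ε| < δ := by simpa [Real.dist_eq] using hε
    set u : Fin p → ℝ :=
      fun i => ((hMe ε).eigenvectorUnitary : Matrix (Fin p) (Fin p) ℝ) i j with hu_def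
    have h1 : (hMe ε).eigenvalues j = u ⬝ᵥ ((S + ε • H) *ᵥ u) := eig_eq (hMe ε) j
    have huu : u ⬝ᵥ u = 1 := by
      have := col_sq_sum (hMe ε) j
      rw [dotProduct]
      rw [← this]
      exact Finset.sum_congr rfl fun i _ => by rw [hu_def]; ring
    have hsplit : u ⬝ᵥ ((S + ε • H) *ᵥ u) = u ⬝ᵥ (S *ᵥ u) + ε * (u ⬝ᵥ (H *ᵥ u)) := by
      rw [Matrix.add_mulVec, dotProduct_add, Matrix.smul_mulVec,
        dotProduct_smul, smul_eq_mul]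
    have hSl : m * 1 ≤ u ⬝ᵥ (S *ᵥ u) := by
      have := le_quad hS.1 (c := m) (fun i => Finset.inf'_le _ (Finset.mem_univ i)) u
      rwa [huu] at this
    have hSu : u ⬝ᵥ (S *ᵥ u) ≤ Mx * 1 := by
      have := quad_le hS.1 (c := Mx) (fun i => Finset.le_sup' _ (Finset.mem_univ i)) u
      rwa [huu] at this
    have hHb : |u ⬝ᵥ (H *ᵥ u)| ≤ CH := by
      refine quad_abs_le H u fun i => ?_
      rw [hu_def]
      exact entry_abs_le (hMe ε) i j
    have hpert : |ε * (u ⬝ᵥ (H *ᵥ u))| ≤ m / 2 := by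
      rw [abs_mul]
      calc |ε| * |u ⬝ᵥ (H *ᵥ u)| ≤ δ * (CH + 1) := by
            apply mul_le_mul hεδ.le (hHb.trans (by linarith)) (abs_nonneg _) hδ.le
        _ = m / 2 := hδCH
    rw [h1, hsplit]
    have := abs_le.1 hpert
    constructor
    · rw [ha_def]; nlinarith
    · rw [hb_def]; nlinarith
  -- the approximating polynomials
  have hcont : ContinuousOn (fun x : ℝ => q * x ^ (q - 1)) (Set.Icc a b) := by
    intro x hx
    have hx0 : x ≠ 0 := ne_of_gt (lt_of_lt_of_le ha hx.1)
    exact (continuousAt_const.mul (Real.continuousAt_rpow_const x (q - 1)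
      (Or.inl hx0))).continuousWithinAt
  have hseq : ∀ n : ℕ, ∃ R : ℝ[X],
      (∀ x ∈ Set.Icc a b,
        |Polynomial.eval x (Polynomial.derivative R) - q * x ^ (q - 1)| ≤ 1 / (n + 1)) ∧
      Polynomial.eval a R = a ^ q := by
    intro n
    obtain ⟨Q, hQ⟩ := exists_polynomial_near_of_continuousOn a b _ hcont (1 / (n + 1))
      (by positivity)
    obtain ⟨P, hP⟩ := exists_antideriv Q
    refine ⟨P + Polynomial.C (a ^ q - Polynomial.eval a P), ?_, by simp⟩
    intro x hx
    rw [map_add, Polynomial.derivative_C, add_zero, hP]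
    exact (hQ x hx).le
  choose R hR1 hR2 using hseq
  -- names
  set g : ℝ → ℝ := fun ε => Matrix.trace (hermRpow (S + ε • H) q) with hg_def
  set g' : ℝ → ℝ := fun ε => q * Matrix.trace (hermRpow (S + ε • H) (q - 1) * H) with hg'_def
  set f : ℕ → ℝ → ℝ := fun n ε => Matrix.trace (Polynomial.aeval (S + ε • H) (R n)) with hf_def
  set f' : ℕ → ℝ → ℝ :=
    fun n ε => Matrix.trace (Polynomial.aeval (S + ε • H) (Polynomial.derivative (R n)) * H)
    with hf'_def
  -- derivative of the polynomial approximations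
  have hder : ∀ n : ℕ, ∀ ε ∈ Metric.ball (0 : ℝ) δ, HasDerivAt (f n) (f' n ε) ε := by
    intro n ε _
    exact hasDerivAt_trace_aeval S H (R n) ε
  -- pointwise convergence
  have hptw : ∀ ε ∈ Metric.ball (0 : ℝ) δ, Filter.Tendsto (fun n => f n ε)
      Filter.atTop (nhds (g ε)) := by
    intro ε hε
    have hbound : ∀ n : ℕ, dist (f n ε) (g ε) ≤ (p : ℝ) * ((1 / (n + 1)) * (b - a)) := by
      intro n
      have hfε : f n ε = ∑ i, Polynomial.eval ((hMe ε).eigenvalues i) (R n) := by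
        rw [hf_def]
        simp only
        rw [aeval_spec (hMe ε), trace_conj_diag' (hMe ε)]
      have hgε : g ε = ∑ i, ((hMe ε).eigenvalues i) ^ q := by
        rw [hg_def]
        simp only
        rw [trace_hermRpow (hMe ε)]
      rw [Real.dist_eq, hfε, hgε, ← Finset.sum_sub_distrib]
      refine (Finset.abs_sum_le_sum_abs _ _).trans ?_
      have hterm : ∀ i : Fin p,
          |Polynomial.eval ((hMe ε).eigenvalues i) (R n) - ((hMe ε).eigenvalues i) ^ q|
            ≤ (1 / (n + 1)) * (b - a) := by
        intro i
        have hlam := heig ε hε i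
        have hderφ : ∀ x ∈ Set.Icc a b, HasDerivWithinAt
            (fun x : ℝ => Polynomial.eval x (R n) - x ^ q)
            (Polynomial.eval x (Polynomial.derivative (R n)) - q * x ^ (q - 1))
            (Set.Icc a b) x := by
          intro x hx
          have hx0 : x ≠ 0 := ne_of_gt (lt_of_lt_of_le ha hx.1)
          exact ((Polynomial.hasDerivAt (R n) x).sub
            (Real.hasDerivAt_rpow_const (Or.inl hx0))).hasDerivWithinAt
        have hbd : ∀ x ∈ Set.Icc a b,
            ‖Polynomial.eval x (Polynomial.derivative (R n)) - q * x ^ (q - 1)‖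
              ≤ 1 / (n + 1) := fun x hx => hR1 n x hx
        have := Convex.norm_image_sub_le_of_norm_hasDerivWithin_le hderφ hbd
          (convex_Icc a b) (Set.left_mem_Icc.2 hab) hlam
        rw [hR2 n] at this
        have habs : |((hMe ε).eigenvalues i) - a| ≤ b - a := by
          rw [abs_le]
          constructor <;> [linarith [hlam.2, hlam.1]; linarith [hlam.2]]
        calc |Polynomial.eval ((hMe ε).eigenvalues i) (R n) - ((hMe ε).eigenvalues i) ^ q|
            = ‖(Polynomial.eval ((hMe ε).eigenvalues i) (R n) - ((hMe ε).eigenvalues i) ^ q)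
                - (a ^ q - a ^ q)‖ := by rw [sub_self, sub_zero]; rfl
          _ ≤ (1 / (n + 1)) * ‖((hMe ε).eigenvalues i) - a‖ := this
          _ ≤ (1 / (n + 1)) * (b - a) := by
              apply mul_le_mul_of_nonneg_left habs (by positivity)
      calc ∑ i, |Polynomial.eval ((hMe ε).eigenvalues i) (R n) - ((hMe ε).eigenvalues i) ^ q|
          ≤ ∑ _i : Fin p, (1 / ((n : ℝ) + 1)) * (b - a) :=
            Finset.sum_le_sum fun i _ => hterm i
        _ = (p : ℝ) * ((1 / (n + 1)) * (b - a)) := by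
            rw [Finset.sum_const, Finset.card_univ, Fintype.card_fin, nsmul_eq_mul]
    have hlim : Filter.Tendsto (fun n : ℕ => (p : ℝ) * ((1 / (n + 1)) * (b - a)))
        Filter.atTop (nhds 0) := by
      have h0 : Filter.Tendsto (fun n : ℕ => 1 / ((n : ℝ) + 1)) Filter.atTop (nhds 0) :=
        tendsto_one_div_add_atTop_nhds_zero_nat
      have := (h0.mul_const (b - a)).const_mul (p : ℝ)
      simpa using this
    rw [tendsto_iff_dist_tendsto_zero]
    exact squeeze_zero (fun n => dist_nonneg) hbound hlim
  -- uniform convergence of the derivatives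
  have hunif : TendstoUniformlyOn f' g' Filter.atTop (Metric.ball (0 : ℝ) δ) := by
    rw [Metric.tendstoUniformlyOn_iff]
    intro η hη
    have hbound : ∀ n : ℕ, ∀ ε ∈ Metric.ball (0 : ℝ) δ,
        dist (g' ε) (f' n ε) ≤ (p : ℝ) * CH * (1 / (n + 1)) := by
      intro n ε hε
      have hfε : f' n ε = ∑ i, Polynomial.eval ((hMe ε).eigenvalues i)
          (Polynomial.derivative (R n)) *
          ((((hMe ε).eigenvectorUnitary : Matrix (Fin p) (Fin p) ℝ))ᵀ * H *
            ((hMe ε).eigenvectorUnitary : Matrix (Fin p) (Fin p) ℝ)) i i := by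
        rw [hf'_def]
        simp only
        rw [aeval_spec (hMe ε), trace_conj_diag (hMe ε)]
      have hgε : g' ε = ∑ i, (q * ((hMe ε).eigenvalues i) ^ (q - 1)) *
          ((((hMe ε).eigenvectorUnitary : Matrix (Fin p) (Fin p) ℝ))ᵀ * H *
            ((hMe ε).eigenvectorUnitary : Matrix (Fin p) (Fin p) ℝ)) i i := by
        rw [hg'_def]
        simp only
        rw [hermRpow_eq (hMe ε), trace_conj_diag (hMe ε), Finset.mul_sum]
        exact Finset.sum_congr rfl fun i _ => by ring
      rw [Real.dist_eq, hgε, hfε, ← Finset.sum_sub_distrib]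
      refine (Finset.abs_sum_le_sum_abs _ _).trans ?_
      have hterm : ∀ i : Fin p,
          |(q * ((hMe ε).eigenvalues i) ^ (q - 1)) *
              ((((hMe ε).eigenvectorUnitary : Matrix (Fin p) (Fin p) ℝ))ᵀ * H *
                ((hMe ε).eigenvectorUnitary : Matrix (Fin p) (Fin p) ℝ)) i i
            - Polynomial.eval ((hMe ε).eigenvalues i) (Polynomial.derivative (R n)) *
              ((((hMe ε).eigenvectorUnitary : Matrix (Fin p) (Fin p) ℝ))ᵀ * H *
                ((hMe ε).eigenvectorUnitary : Matrix (Fin p) (Fin p) ℝ)) i i|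
            ≤ (1 / (n + 1)) * CH := by
        intro i
        rw [← sub_mul, abs_mul]
        have h1 : |q * ((hMe ε).eigenvalues i) ^ (q - 1)
            - Polynomial.eval ((hMe ε).eigenvalues i) (Polynomial.derivative (R n))|
            ≤ 1 / (n + 1) := by
          rw [abs_sub_comm]
          exact hR1 n _ (heig ε hε i)
        have h2 : |((((hMe ε).eigenvectorUnitary : Matrix (Fin p) (Fin p) ℝ))ᵀ * H *
            ((hMe ε).eigenvectorUnitary : Matrix (Fin p) (Fin p) ℝ)) i i| ≤ CH := by
          rw [conj_diag_entry (hMe ε)]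
          exact quad_abs_le H _ fun k => entry_abs_le (hMe ε) k i
        exact mul_le_mul h1 h2 (abs_nonneg _) (by positivity)
      calc ∑ i, |(q * ((hMe ε).eigenvalues i) ^ (q - 1)) *
              ((((hMe ε).eigenvectorUnitary : Matrix (Fin p) (Fin p) ℝ))ᵀ * H *
                ((hMe ε).eigenvectorUnitary : Matrix (Fin p) (Fin p) ℝ)) i i
            - Polynomial.eval ((hMe ε).eigenvalues i) (Polynomial.derivative (R n)) *
              ((((hMe ε).eigenvectorUnitary : Matrix (Fin p) (Fin p) ℝ))ᵀ * H *
                ((hMe ε).eigenvectorUnitary : Matrix (Fin p) (Fin p) ℝ)) i i|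
          ≤ ∑ _i : Fin p, (1 / ((n : ℝ) + 1)) * CH := Finset.sum_le_sum fun i _ => hterm i
        _ = (p : ℝ) * CH * (1 / (n + 1)) := by
            rw [Finset.sum_const, Finset.card_univ, Fintype.card_fin, nsmul_eq_mul]; ring
    have hlim : Filter.Tendsto (fun n : ℕ => (p : ℝ) * CH * (1 / (n + 1)))
        Filter.atTop (nhds 0) := by
      have h0 : Filter.Tendsto (fun n : ℕ => 1 / ((n : ℝ) + 1)) Filter.atTop (nhds 0) :=
        tendsto_one_div_add_atTop_nhds_zero_nat
      simpa using h0.const_mul ((p : ℝ) * CH)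
    have hev := hlim.eventually (gt_mem_nhds hη)
    filter_upwards [hev] with n hn ε hε
    exact lt_of_le_of_lt (hbound n ε hε) hn
  -- conclude
  have hmain := hasDerivAt_of_tendstoUniformlyOn Metric.isOpen_ball hunif
    (Filter.Eventually.of_forall fun n ε hε => hder n ε hε) hptw (Metric.mem_ball_self hδ)
  have h0 : g' 0 = q * Matrix.trace (hermRpow S (q - 1) * H) := by
    rw [hg'_def]; simp
  rw [hg_def] at hmain
  rw [← h0]
  exact hmain
end

section
/- Let (𝔉ₙ)_{n≥1} be a filtration, and let (aₙ)_{n≥1}, (cₙ)_{n≥1} be integrable real random variables and (Zₙ)_{n≥1} nonnegative integrable real random variables, all adapted to (𝔉ₙ). Write aₙ^- = max(0, −aₙ). Assume 𝔼[Z_{n+1} | 𝔉ₙ] ≤ (1 − aₙ)·Zₙ + cₙ almost surely for all n ≥ 1, that Σ_{n=1}^∞ aₙ^- < ∞ almost surely, and that the series Σ_{n=1}^∞ cₙ converges almost surely to a finite limit. Then there exists a nonnegative, almost surely finite random variable Z_∞ such that Zₙ → Z_∞ almost surely. -/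
open MeasureTheory Filter Topology

section RobbinsSiegmundAux

variable {Ω : Type*}

/-- `rsb a n ω = (a (n+1) ω)⁻ = max 0 (-(a (n+1) ω))`. -/
noncomputable def rsb (a : ℕ → Ω → ℝ) (n : ℕ) (ω : Ω) : ℝ := max 0 (-(a (n + 1) ω))

/-- `rsP a n ω = ∏_{k<n} (1 + rsb a k ω)`. -/
noncomputable def rsP (a : ℕ → Ω → ℝ) (n : ℕ) (ω : Ω) : ℝ :=
  ∏ k ∈ Finset.range n, (1 + rsb a k ω)

noncomputable def rsW (a Z : ℕ → Ω → ℝ) (n : ℕ) (ω : Ω) : ℝ :=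
  (rsP a n ω)⁻¹ * Z (n + 1) ω

noncomputable def rsd (a c : ℕ → Ω → ℝ) (n : ℕ) (ω : Ω) : ℝ :=
  (rsP a (n + 1) ω)⁻¹ * c (n + 1) ω

noncomputable def rsS (a c : ℕ → Ω → ℝ) (n : ℕ) (ω : Ω) : ℝ :=
  ∑ k ∈ Finset.range n, rsd a c k ω

noncomputable def rsX (a c Z : ℕ → Ω → ℝ) (n : ℕ) (ω : Ω) : ℝ :=
  rsW a Z n ω - rsS a c n ω

lemma rsb_nonneg (a : ℕ → Ω → ℝ) (n : ℕ) (ω : Ω) : 0 ≤ rsb a n ω := le_max_left _ _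

lemma rsP_one_le (a : ℕ → Ω → ℝ) (n : ℕ) (ω : Ω) : 1 ≤ rsP a n ω := by
  calc (1:ℝ) = ∏ _k ∈ Finset.range n, (1:ℝ) := Finset.prod_const_one.symm
    _ ≤ rsP a n ω := Finset.prod_le_prod (fun i _ => zero_le_one)
        (fun i _ => by linarith [rsb_nonneg a i ω])

lemma rsP_pos (a : ℕ → Ω → ℝ) (n : ℕ) (ω : Ω) : 0 < rsP a n ω :=
  lt_of_lt_of_le one_pos (rsP_one_le a n ω)

lemma rsP_succ (a : ℕ → Ω → ℝ) (n : ℕ) (ω : Ω) :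
    rsP a (n + 1) ω = rsP a n ω * (1 + rsb a n ω) := Finset.prod_range_succ _ _

lemma rsP_mono (a : ℕ → Ω → ℝ) (ω : Ω) : Monotone fun n => rsP a n ω := by
  refine monotone_nat_of_le_succ fun n => ?_
  rw [rsP_succ]
  nlinarith [rsP_pos a n ω, rsb_nonneg a n ω]

lemma rsPinv_mul (a : ℕ → Ω → ℝ) (n : ℕ) (ω : Ω) :
    (rsP a (n + 1) ω)⁻¹ * (1 + rsb a n ω) = (rsP a n ω)⁻¹ := by
  have h1 : (0:ℝ) < 1 + rsb a n ω := by linarith [rsb_nonneg a n ω]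
  rw [rsP_succ, mul_inv, mul_assoc, inv_mul_cancel₀ (ne_of_gt h1), mul_one]

end RobbinsSiegmundAux

/-- Dirichlet-type test: if `r` is antitone converging to some limit and the partial sums
of `g` converge, then the partial sums of `r * g` converge. -/
lemma rs_aux_dirichlet {g r : ℕ → ℝ} {L l : ℝ} (hr : Antitone r)
    (hrL : Tendsto r atTop (𝓝 L))
    (hg : Tendsto (fun N => ∑ i ∈ Finset.range N, g i) atTop (𝓝 l)) :
    ∃ s : ℝ, Tendsto (fun N => ∑ i ∈ Finset.range N, r i * g i) atTop (𝓝 s) := by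
  obtain ⟨b, hb⟩ : ∃ b : ℝ, ∀ n, ‖∑ i ∈ Finset.range n, g i‖ ≤ b := by
    have hbdd : BddAbove (Set.range fun n => ‖∑ i ∈ Finset.range n, g i‖) :=
      (hg.norm).bddAbove_range
    obtain ⟨b, hb⟩ := hbdd
    exact ⟨b, fun n => hb (Set.mem_range_self n)⟩
  have hf : Antitone (fun n => r n - L) := fun i j h => by
    have := hr h; simp only [sub_le_sub_iff_right]; exact this
  have hf0 : Tendsto (fun n => r n - L) atTop (𝓝 0) := by
    simpa using hrL.sub_const L
  have hc : CauchySeq fun N => ∑ i ∈ Finset.range N, (r i - L) • g i :=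
    hf.cauchySeq_series_mul_of_tendsto_zero_of_bounded hf0 hb
  obtain ⟨s0, hs0⟩ := cauchySeq_tendsto_of_complete hc
  refine ⟨s0 + L * l, ?_⟩
  have heq : ∀ N, ∑ i ∈ Finset.range N, r i * g i
      = (∑ i ∈ Finset.range N, (r i - L) • g i) + L * ∑ i ∈ Finset.range N, g i := by
    intro N
    rw [Finset.mul_sum, ← Finset.sum_add_distrib]
    refine Finset.sum_congr rfl fun i _ => ?_
    simp only [smul_eq_mul]; ring
  simp only [heq]
  exact hs0.add (hg.const_mul L)

/-- Convergence of products `∏ (1 + b k)` for nonnegative summable `b`. -/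
lemma rs_aux_prod {b : ℕ → ℝ} (hb : ∀ n, 0 ≤ b n) (hs : Summable b) :
    ∃ Pl : ℝ, 1 ≤ Pl ∧
      Tendsto (fun N => ∏ k ∈ Finset.range N, (1 + b k)) atTop (𝓝 Pl) := by
  set P : ℕ → ℝ := fun N => ∏ k ∈ Finset.range N, (1 + b k) with hP
  have hone : ∀ N, 1 ≤ P N := fun N => by
    show (1:ℝ) ≤ ∏ k ∈ Finset.range N, (1 + b k)
    calc (1:ℝ) = ∏ _k ∈ Finset.range N, (1:ℝ) := Finset.prod_const_one.symm
      _ ≤ ∏ k ∈ Finset.range N, (1 + b k) :=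
        Finset.prod_le_prod (fun i _ => zero_le_one) (fun i _ => by linarith [hb i])
  have hmono : Monotone P := monotone_nat_of_le_succ fun n => by
    have h1 : P (n + 1) = P n * (1 + b n) := Finset.prod_range_succ _ _
    nlinarith [hone n, hb n]
  have hbdd : BddAbove (Set.range P) := by
    refine ⟨Real.exp (∑' n, b n), ?_⟩
    rintro _ ⟨N, rfl⟩
    calc P N ≤ ∏ k ∈ Finset.range N, Real.exp (b k) :=
          Finset.prod_le_prod (fun i _ => by linarith [hb i])
            (fun i _ => by linarith [Real.add_one_le_exp (b i)])
      _ = Real.exp (∑ k ∈ Finset.range N, b k) := (Real.exp_sum _ _).symm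
      _ ≤ Real.exp (∑' n, b n) :=
          Real.exp_le_exp.mpr (Summable.sum_le_tsum _ (fun i _ => hb i) hs)
  have htend := tendsto_atTop_ciSup hmono hbdd
  exact ⟨_, le_trans (hone 0) (le_ciSup hbdd 0), htend⟩

/-- If `X` is a supermartingale of the form `X n = W n - S n` with `W` a.e. nonnegative and
`S (n+1)` being `𝒢 n`-measurable with `S 0 = 0`, then a.e. on the event that `S` is bounded
above, `X` converges. -/
lemma rs_aux_stop {Ω : Type*} {m0 : MeasurableSpace Ω} {μ : Measure Ω}
    [IsProbabilityMeasure μ]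
    (𝒢 : Filtration ℕ m0) (X W S : ℕ → Ω → ℝ)
    (hX : Supermartingale X 𝒢 μ)
    (hSmeas : ∀ n, StronglyMeasurable[𝒢 n] (S (n + 1)))
    (hXW : ∀ n ω, X n ω = W n ω - S n ω)
    (hS0 : ∀ ω, S 0 ω = 0)
    (hW : ∀ᵐ ω ∂μ, ∀ n, 0 ≤ W n ω) :
    ∀ᵐ ω ∂μ, (∃ B : ℝ, ∀ n, S n ω ≤ B) →
      ∃ xl : ℝ, Tendsto (fun n => X n ω) atTop (𝓝 xl) := by
  have key : ∀ M : ℕ, ∀ᵐ ω ∂μ, (∀ n, 0 ≤ W n ω) → (∀ n, S (n + 1) ω ≤ (M : ℝ)) →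
      ∃ xl : ℝ, Tendsto (fun n => X n ω) atTop (𝓝 xl) := by
    intro M
    -- the stopping event
    set A : ℕ → Set Ω := fun n => {ω | ∀ k ≤ n, S (k + 1) ω ≤ (M : ℝ)} with hA
    have hAmeas : ∀ n, MeasurableSet[𝒢 n] (A n) := by
      intro n
      have : A n = ⋂ k ∈ Set.Iic n, {ω | S (k + 1) ω ≤ (M : ℝ)} := by
        ext ω; simp [hA, Set.mem_iInter]
      rw [this]
      refine MeasurableSet.biInter (Set.to_countable _) fun k hk => ?_
      exact measurableSet_le (((hSmeas k).measurable.mono (𝒢.mono hk) le_rfl)) measurable_const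
    have hAanti : ∀ {k n : ℕ}, k ≤ n → A n ⊆ A k := by
      intro k n hkn ω hω j hj
      exact hω j (hj.trans hkn)
    -- the stopped increments and process
    set D : ℕ → Ω → ℝ := fun k => (A k).indicator (fun ω => X (k + 1) ω - X k ω) with hD
    set Y : ℕ → Ω → ℝ := fun n ω => X 0 ω + ∑ k ∈ Finset.range n, D k ω with hY
    have hYsucc : ∀ n ω, Y (n + 1) ω = Y n ω + D n ω := by
      intro n ω; simp [hY, Finset.sum_range_succ]; ring
    have hDint : ∀ k, Integrable (D k) μ := fun k =>
      ((hX.integrable (k + 1)).sub (hX.integrable k)).indicator (𝒢.le k _ (hAmeas k))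
    have hYint : ∀ n, Integrable (Y n) μ := fun n =>
      (hX.integrable 0).add (integrable_finset_sum _ fun k _ => hDint k)
    have hDmeas : ∀ k, StronglyMeasurable[𝒢 (k + 1)] (D k) := fun k =>
      (((hX.stronglyMeasurable (k + 1)).sub
        ((hX.stronglyMeasurable k).mono (𝒢.mono k.le_succ)))).indicator
        ((𝒢.mono k.le_succ) _ (hAmeas k))
    have hYadapted : StronglyAdapted 𝒢 Y := by
      intro n
      have hsum : StronglyMeasurable[𝒢 n] fun ω => ∑ k ∈ Finset.range n, D k ω :=
        Finset.stronglyMeasurable_fun_sum _ fun k hk =>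
          (hDmeas k).mono (𝒢.mono (Finset.mem_range.mp hk))
      exact ((hX.stronglyMeasurable 0).mono (𝒢.mono (Nat.zero_le n))).add hsum
    have hYsuper : Supermartingale Y 𝒢 μ := by
      refine supermartingale_nat hYadapted hYint fun n => ?_
      have h1 : μ[Y (n + 1)|𝒢 n] =ᵐ[μ] μ[Y n|𝒢 n] + μ[D n|𝒢 n] := by
        have : Y (n + 1) = Y n + D n := by funext ω; exact hYsucc n ω
        rw [this]; exact condExp_add (hYint n) (hDint n) _
      have h2 : μ[Y n|𝒢 n] = Y n :=
        condExp_of_stronglyMeasurable (𝒢.le n) (hYadapted n) (hYint n)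
      have h3 : μ[D n|𝒢 n] =ᵐ[μ] (A n).indicator
          (μ[(fun ω => X (n + 1) ω - X n ω)|𝒢 n]) :=
        condExp_indicator ((hX.integrable (n + 1)).sub (hX.integrable n)) (hAmeas n)
      have h4 : μ[(fun ω => X (n + 1) ω - X n ω)|𝒢 n]
          =ᵐ[μ] μ[X (n + 1)|𝒢 n] - μ[X n|𝒢 n] :=
        condExp_sub (hX.integrable (n + 1)) (hX.integrable n) _
      have h5 : μ[X n|𝒢 n] = X n :=
        condExp_of_stronglyMeasurable (𝒢.le n) (hX.stronglyMeasurable n) (hX.integrable n)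
      have h6 : μ[X (n + 1)|𝒢 n] ≤ᵐ[μ] X n := hX.condExp_ae_le n.le_succ
      filter_upwards [h1, h3, h4, h6] with ω hω1 hω3 hω4 hω6
      rw [hω1]
      simp only [Pi.add_apply, h2]
      have hind : (A n).indicator (μ[(fun ω => X (n + 1) ω - X n ω)|𝒢 n]) ω ≤ 0 := by
        by_cases hmem : ω ∈ A n
        · rw [Set.indicator_of_mem hmem, hω4]
          simp only [Pi.sub_apply, h5]
          linarith
        · rw [Set.indicator_of_notMem hmem]
      rw [hω3]
      linarith
    -- identification of Y with X before stopping
    have hYX : ∀ ω, ∀ n : ℕ, (∀ k, k < n → ω ∈ A k) → Y n ω = X n ω := by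
      intro ω n
      induction n with
      | zero => intro _; simp [hY]
      | succ n ih =>
        intro h
        rw [hYsucc, ih (fun k hk => h k (hk.trans n.lt_succ_self))]
        simp only [hD]
        rw [Set.indicator_of_mem (h n n.lt_succ_self)]
        ring
    -- lower bound
    have hYlb : ∀ᵐ ω ∂μ, ∀ n, -(M : ℝ) ≤ Y n ω := by
      filter_upwards [hW] with ω hWω
      intro n
      induction n with
      | zero =>
        have : Y 0 ω = X 0 ω := hYX ω 0 (fun k hk => absurd hk (Nat.not_lt_zero k))
        rw [this, hXW, hS0]
        have := hWω 0
        have hM : (0:ℝ) ≤ (M:ℝ) := Nat.cast_nonneg M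
        linarith
      | succ n ih =>
        by_cases hmem : ω ∈ A n
        · have hall : ∀ k, k < n + 1 → ω ∈ A k := fun k hk =>
            hAanti (Nat.lt_succ_iff.mp hk) hmem
          rw [hYX ω (n + 1) hall, hXW]
          have h1 : S (n + 1) ω ≤ (M : ℝ) := hmem n le_rfl
          have h2 := hWω (n + 1)
          linarith
        · rw [hYsucc]
          simp only [hD]
          rw [Set.indicator_of_notMem hmem]
          simpa using ih
    -- L¹ bound
    have hexp : ∀ n, ∫ ω, Y n ω ∂μ ≤ ∫ ω, Y 0 ω ∂μ := by
      intro n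
      have h1 : μ[Y n|𝒢 0] ≤ᵐ[μ] Y 0 := hYsuper.condExp_ae_le (Nat.zero_le n)
      calc ∫ ω, Y n ω ∂μ = ∫ ω, (μ[Y n|𝒢 0]) ω ∂μ := (integral_condExp (𝒢.le 0)).symm
        _ ≤ ∫ ω, Y 0 ω ∂μ := integral_mono_ae integrable_condExp (hYint 0) h1
    set R : NNReal := (∫ ω, Y 0 ω ∂μ + 2 * M).toNNReal with hR
    have hbdd : ∀ n, eLpNorm (Y n) 1 μ ≤ (R : ENNReal) := by
      intro n
      have habs : ∀ᵐ ω ∂μ, |Y n ω| ≤ Y n ω + 2 * M := by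
        filter_upwards [hYlb] with ω hlb
        have := hlb n
        rw [abs_le]
        constructor <;> [skip; skip] <;> [linarith; linarith [Nat.cast_nonneg (α := ℝ) M]]
      have hint1 : ∫ ω, |Y n ω| ∂μ ≤ ∫ ω, Y 0 ω ∂μ + 2 * M := by
        calc ∫ ω, |Y n ω| ∂μ ≤ ∫ ω, (Y n ω + 2 * M) ∂μ :=
              integral_mono_ae (hYint n).abs ((hYint n).add (integrable_const _)) habs
          _ = ∫ ω, Y n ω ∂μ + 2 * M := by
              rw [integral_add (hYint n) (integrable_const _)]
              simp [measure_univ]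
          _ ≤ ∫ ω, Y 0 ω ∂μ + 2 * M := by linarith [hexp n]
      have heq : eLpNorm (Y n) 1 μ = ENNReal.ofReal (∫ ω, |Y n ω| ∂μ) := by
        rw [eLpNorm_one_eq_lintegral_enorm,
          ← ofReal_integral_norm_eq_lintegral_enorm (hYint n)]
        simp [Real.norm_eq_abs]
      rw [heq, hR]
      calc ENNReal.ofReal (∫ ω, |Y n ω| ∂μ)
          ≤ ENNReal.ofReal (∫ ω, Y 0 ω ∂μ + 2 * M) := ENNReal.ofReal_le_ofReal hint1
        _ = ((∫ ω, Y 0 ω ∂μ + 2 * M).toNNReal : ENNReal) := rfl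
    -- convergence of Y
    have hYconv : ∀ᵐ ω ∂μ, ∃ yl : ℝ, Tendsto (fun n => Y n ω) atTop (𝓝 yl) := by
      have hsub : Submartingale (-Y) 𝒢 μ := hYsuper.neg
      have hbdd' : ∀ n, eLpNorm ((-Y) n) 1 μ ≤ (R : ENNReal) := by
        intro n
        have : (-Y) n = -(Y n) := rfl
        rw [this, eLpNorm_neg]
        exact hbdd n
      filter_upwards [hsub.exists_ae_tendsto_of_bdd hbdd'] with ω hconv
      obtain ⟨yl, hyl⟩ := hconv
      refine ⟨-yl, ?_⟩
      have : (fun n => Y n ω) = fun n => -((-Y) n ω) := by funext n; simp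
      rw [this]
      exact hyl.neg
    filter_upwards [hYconv] with ω hconv hWω hSM
    obtain ⟨yl, hyl⟩ := hconv
    have hall : ∀ n, ∀ k, k < n → ω ∈ A k := fun n k _ => fun j _ => hSM j
    refine ⟨yl, hyl.congr fun n => hYX ω n (hall n)⟩
  have key' : ∀ᵐ ω ∂μ, ∀ M : ℕ, (∀ n, 0 ≤ W n ω) → (∀ n, S (n + 1) ω ≤ (M : ℝ)) →
      ∃ xl : ℝ, Tendsto (fun n => X n ω) atTop (𝓝 xl) := ae_all_iff.mpr key
  filter_upwards [key', hW] with ω hkey hWω hB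
  obtain ⟨B, hB⟩ := hB
  obtain ⟨M, hM⟩ := exists_nat_ge B
  exact hkey M hWω fun n => (hB (n + 1)).trans hM

/-- Modified Robbins–Siegmund theorem, Part 1: almost sure convergence of `Zₙ` to a
nonnegative finite limit. -/
theorem modified_robbins_siegmund_part1
    {Ω : Type*} {m0 : MeasurableSpace Ω} {μ : Measure Ω} [IsProbabilityMeasure μ]
    (ℱ : Filtration ℕ m0)
    (a c Z : ℕ → Ω → ℝ)
    (haadapted : Adapted ℱ a) (hcadapted : Adapted ℱ c) (hZadapted : Adapted ℱ Z)
    (haint : ∀ n, Integrable (a n) μ) (hcint : ∀ n, Integrable (c n) μ)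
    (hZint : ∀ n, Integrable (Z n) μ) (hZnonneg : ∀ n, 0 ≤ᵐ[μ] Z n)
    (hrec : ∀ n : ℕ, 1 ≤ n →
      μ[Z (n + 1) | ℱ n] ≤ᵐ[μ] fun ω => (1 - a n ω) * Z n ω + c n ω)
    (haminus : ∀ᵐ ω ∂μ, Summable fun n : ℕ => max 0 (-(a (n + 1) ω)))
    (hcsum : ∀ᵐ ω ∂μ, ∃ l : ℝ,
      Tendsto (fun N => ∑ n ∈ Finset.Icc 1 N, c n ω) atTop (𝓝 l)) :
    ∃ Zlim : Ω → ℝ, (∀ᵐ ω ∂μ, 0 ≤ Zlim ω) ∧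
      ∀ᵐ ω ∂μ, Tendsto (fun n => Z n ω) atTop (𝓝 (Zlim ω)) := by
  classical
  -- the shifted filtration
  set 𝒢 : Filtration ℕ m0 :=
    ⟨fun n => ℱ (n + 1), fun i j hij => ℱ.mono (by omega), fun n => ℱ.le _⟩ with h𝒢
  have h𝒢n : ∀ n, 𝒢 n = ℱ (n + 1) := fun n => rfl
  -- measurability of the building blocks
  have hbm : ∀ n, StronglyMeasurable[ℱ (n + 1)] (rsb a n) := by
    intro n
    letI m' : MeasurableSpace Ω := ℱ (n + 1)
    have h1 : StronglyMeasurable[ℱ (n + 1)] (fun ω => -(a (n + 1) ω)) := (haadapted (n + 1)).stronglyMeasurable.neg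
    have h0 : StronglyMeasurable[ℱ (n + 1)] (fun _ : Ω => (0:ℝ)) := stronglyMeasurable_const
    exact h0.sup h1
  have hbint : ∀ n, Integrable (rsb a n) μ := by
    intro n
    have h1 : Integrable (fun ω => max (-(a (n + 1) ω)) 0) μ := (haint (n + 1)).neg.pos_part
    have h2 : rsb a n = fun ω => max (-(a (n + 1) ω)) 0 := funext fun ω => max_comm _ _
    rw [h2]; exact h1
  have hPm : ∀ n, StronglyMeasurable[ℱ n] (rsP a n) := by
    intro n
    induction n with
    | zero =>
      have : rsP a 0 = fun _ => (1:ℝ) := by funext ω; simp [rsP]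
      rw [this]; exact stronglyMeasurable_const
    | succ n ih =>
      have : rsP a (n + 1) = fun ω => rsP a n ω * (1 + rsb a n ω) := by
        funext ω; exact rsP_succ a n ω
      rw [this]
      exact (ih.mono (ℱ.mono n.le_succ)).mul (stronglyMeasurable_const.add (hbm n))
  have hPim : ∀ n, StronglyMeasurable[ℱ n] (fun ω => (rsP a n ω)⁻¹) := fun n =>
    ((hPm n).measurable.inv).stronglyMeasurable
  have hWm : ∀ n, StronglyMeasurable[ℱ (n + 1)] (rsW a Z n) := by
    intro n
    show StronglyMeasurable[ℱ (n + 1)] fun ω => (rsP a n ω)⁻¹ * Z (n + 1) ω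
    exact ((hPim n).mono (ℱ.mono n.le_succ)).mul (hZadapted (n + 1)).stronglyMeasurable
  have hdm : ∀ n, StronglyMeasurable[ℱ (n + 1)] (rsd a c n) := by
    intro n
    show StronglyMeasurable[ℱ (n + 1)] fun ω => (rsP a (n + 1) ω)⁻¹ * c (n + 1) ω
    exact (hPim (n + 1)).mul (hcadapted (n + 1)).stronglyMeasurable
  have hSm : ∀ n, StronglyMeasurable[ℱ n] (rsS a c n) := by
    intro n
    show StronglyMeasurable[ℱ n] fun ω => ∑ k ∈ Finset.range n, rsd a c k ω
    exact Finset.stronglyMeasurable_fun_sum _ fun k hk =>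
      (hdm k).mono (ℱ.mono (Finset.mem_range.mp hk))
  have hXm : ∀ n, StronglyMeasurable[ℱ (n + 1)] (rsX a c Z n) := by
    intro n
    show StronglyMeasurable[ℱ (n + 1)] fun ω => rsW a Z n ω - rsS a c n ω
    exact (hWm n).sub ((hSm n).mono (ℱ.mono n.le_succ))
  -- integrability
  have hPinv_bd : ∀ n ω, 0 ≤ (rsP a n ω)⁻¹ ∧ (rsP a n ω)⁻¹ ≤ 1 := by
    intro n ω
    constructor
    · exact inv_nonneg.mpr (rsP_pos a n ω).le
    · rw [inv_le_one_iff₀]; right; exact rsP_one_le a n ω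
  have hWint : ∀ n, Integrable (rsW a Z n) μ := by
    intro n
    refine Integrable.mono (hZint (n + 1))
      (((hWm n).mono (ℱ.le _)).aestronglyMeasurable) ?_
    refine Eventually.of_forall fun ω => ?_
    have h := hPinv_bd n ω
    simp only [rsW, Real.norm_eq_abs, abs_mul]
    calc |(rsP a n ω)⁻¹| * |Z (n + 1) ω| = (rsP a n ω)⁻¹ * |Z (n + 1) ω| := by
          rw [abs_of_nonneg h.1]
      _ ≤ 1 * |Z (n + 1) ω| := by
          exact mul_le_mul_of_nonneg_right h.2 (abs_nonneg _)
      _ = |Z (n + 1) ω| := one_mul _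
  have hdint : ∀ n, Integrable (rsd a c n) μ := by
    intro n
    refine Integrable.mono (hcint (n + 1))
      (((hdm n).mono (ℱ.le _)).aestronglyMeasurable) ?_
    refine Eventually.of_forall fun ω => ?_
    have h := hPinv_bd (n + 1) ω
    simp only [rsd, Real.norm_eq_abs, abs_mul]
    calc |(rsP a (n + 1) ω)⁻¹| * |c (n + 1) ω| = (rsP a (n + 1) ω)⁻¹ * |c (n + 1) ω| := by
          rw [abs_of_nonneg h.1]
      _ ≤ 1 * |c (n + 1) ω| := mul_le_mul_of_nonneg_right h.2 (abs_nonneg _)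
      _ = |c (n + 1) ω| := one_mul _
  have hSint : ∀ n, Integrable (rsS a c n) μ := by
    intro n
    have : rsS a c n = fun ω => ∑ k ∈ Finset.range n, rsd a c k ω := rfl
    rw [this]
    exact integrable_finset_sum _ fun k _ => hdint k
  have hXint : ∀ n, Integrable (rsX a c Z n) μ := fun n => (hWint n).sub (hSint n)
  -- the supermartingale property
  have hXadapted : StronglyAdapted 𝒢 (rsX a c Z) := fun n => hXm n
  have hstep : ∀ n, μ[rsX a c Z (n + 1)|𝒢 n] ≤ᵐ[μ] rsX a c Z n := by
    intro n
    have hXeq : rsX a c Z (n + 1) = rsW a Z (n + 1) - rsS a c (n + 1) := rfl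
    have e1 : μ[rsX a c Z (n + 1)|𝒢 n]
        =ᵐ[μ] μ[rsW a Z (n + 1)|𝒢 n] - μ[rsS a c (n + 1)|𝒢 n] := by
      rw [hXeq]; exact condExp_sub (hWint (n + 1)) (hSint (n + 1)) _
    have e1b : μ[rsS a c (n + 1)|𝒢 n] = rsS a c (n + 1) :=
      condExp_of_stronglyMeasurable (𝒢.le n) (hSm (n + 1)) (hSint (n + 1))
    have hWeq : rsW a Z (n + 1) = (fun ω => (rsP a (n + 1) ω)⁻¹) * Z (n + 2) := rfl
    have hint1 : Integrable ((fun ω => (rsP a (n + 1) ω)⁻¹) * Z (n + 2)) μ := by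
      rw [← hWeq]; exact hWint (n + 1)
    have e2 : μ[rsW a Z (n + 1)|𝒢 n]
        =ᵐ[μ] (fun ω => (rsP a (n + 1) ω)⁻¹) * μ[Z (n + 2)|𝒢 n] := by
      rw [hWeq]
      exact condExp_mul_of_stronglyMeasurable_left (hPim (n + 1)) hint1 (hZint (n + 2))
    have e3 : μ[Z (n + 2)|𝒢 n] ≤ᵐ[μ]
        fun ω => (1 - a (n + 1) ω) * Z (n + 1) ω + c (n + 1) ω :=
      hrec (n + 1) (Nat.le_add_left 1 n)
    filter_upwards [e1, e2, e3, hZnonneg (n + 1)] with ω hω1 hω2 hω3 hZp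
    have hPinv_nn : 0 ≤ (rsP a (n + 1) ω)⁻¹ := (hPinv_bd (n + 1) ω).1
    have hab : 1 - a (n + 1) ω ≤ 1 + rsb a n ω := by
      have : -(a (n + 1) ω) ≤ rsb a n ω := le_max_right _ _
      linarith
    have hZp' : (0:ℝ) ≤ Z (n + 1) ω := hZp
    calc (μ[rsX a c Z (n + 1)|𝒢 n]) ω
        = (rsP a (n + 1) ω)⁻¹ * (μ[Z (n + 2)|𝒢 n]) ω - rsS a c (n + 1) ω := by
          rw [hω1]; simp only [Pi.sub_apply, e1b]; rw [hω2]; rfl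
      _ ≤ (rsP a (n + 1) ω)⁻¹ * ((1 - a (n + 1) ω) * Z (n + 1) ω + c (n + 1) ω)
            - rsS a c (n + 1) ω := by
          have := mul_le_mul_of_nonneg_left hω3 hPinv_nn
          linarith
      _ ≤ (rsP a (n + 1) ω)⁻¹ * ((1 + rsb a n ω) * Z (n + 1) ω + c (n + 1) ω)
            - rsS a c (n + 1) ω := by
          have h1 : (1 - a (n + 1) ω) * Z (n + 1) ω ≤ (1 + rsb a n ω) * Z (n + 1) ω :=
            mul_le_mul_of_nonneg_right hab hZp'
          have := mul_le_mul_of_nonneg_left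
            (add_le_add_right h1 (c (n + 1) ω)) hPinv_nn
          linarith
      _ = (rsP a n ω)⁻¹ * Z (n + 1) ω + rsd a c n ω - rsS a c (n + 1) ω := by
          rw [mul_add]
          have h1 : (rsP a (n + 1) ω)⁻¹ * ((1 + rsb a n ω) * Z (n + 1) ω)
              = (rsP a n ω)⁻¹ * Z (n + 1) ω := by
            rw [← mul_assoc, rsPinv_mul]
          rw [h1]; rfl
      _ = rsX a c Z n ω := by
          have hS1 : rsS a c (n + 1) ω = rsS a c n ω + rsd a c n ω :=
            Finset.sum_range_succ _ _
          simp only [rsX, rsW]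
          rw [hS1]; ring
  have hXsuper : Supermartingale (rsX a c Z) 𝒢 μ :=
    supermartingale_nat hXadapted hXint hstep
  -- nonnegativity of W
  have hWnonneg : ∀ᵐ ω ∂μ, ∀ n, 0 ≤ rsW a Z n ω := by
    have h := ae_all_iff.mpr hZnonneg
    filter_upwards [h] with ω hω n
    exact mul_nonneg (hPinv_bd n ω).1 (hω (n + 1))
  -- apply the stopped supermartingale convergence
  have hXconv := rs_aux_stop 𝒢 (rsX a c Z) (rsW a Z) (rsS a c) hXsuper
    (fun n => hSm (n + 1)) (fun n ω => rfl) (fun ω => by simp [rsS]) hWnonneg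
  -- pointwise analysis on a full-measure set
  have hglobal : ∀ᵐ ω ∂μ, ∃ zl : ℝ, 0 ≤ zl ∧ Tendsto (fun n => Z n ω) atTop (𝓝 zl) := by
    filter_upwards [hXconv, haminus, hcsum, ae_all_iff.mpr hZnonneg]
      with ω hXc hsummable hcl hZp
    -- convergence of the products
    have hbsum : Summable fun n => rsb a n ω := by
      have : (fun n => rsb a n ω) = fun n : ℕ => max 0 (-(a (n + 1) ω)) := rfl
      rw [this]; exact hsummable
    obtain ⟨Pl, hPl1, hPltend⟩ := rs_aux_prod (fun n => rsb_nonneg a n ω) hbsum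
    have hPtend : Tendsto (fun n => rsP a n ω) atTop (𝓝 Pl) := hPltend
    -- convergence of partial sums of d via Dirichlet's test
    obtain ⟨l, hl⟩ := hcl
    have hgtend : Tendsto (fun N => ∑ k ∈ Finset.range N, c (k + 1) ω) atTop (𝓝 l) := by
      refine hl.congr fun N => ?_
      rw [← Finset.Ico_add_one_right_eq_Icc, Finset.sum_Ico_eq_sum_range]
      simp [add_comm]
    have hrant : Antitone fun n => (rsP a (n + 1) ω)⁻¹ := by
      intro i j hij
      exact inv_anti₀ (rsP_pos a (i + 1) ω) (rsP_mono a ω (by omega))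
    have hrtend : Tendsto (fun n => (rsP a (n + 1) ω)⁻¹) atTop (𝓝 Pl⁻¹) := by
      have h1 : Tendsto (fun n => rsP a (n + 1) ω) atTop (𝓝 Pl) :=
        (tendsto_add_atTop_iff_nat 1).mpr hPtend
      exact h1.inv₀ (by linarith)
    obtain ⟨s, hs⟩ := rs_aux_dirichlet hrant hrtend hgtend
    have hStend : Tendsto (fun N => rsS a c N ω) atTop (𝓝 s) := by
      refine hs.congr fun N => ?_
      rfl
    -- S is bounded above
    have hSbd : ∃ B : ℝ, ∀ n, rsS a c n ω ≤ B := by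
      have hbdd : BddAbove (Set.range fun n => rsS a c n ω) := hStend.bddAbove_range
      obtain ⟨B, hB⟩ := hbdd
      exact ⟨B, fun n => hB (Set.mem_range_self n)⟩
    obtain ⟨xl, hxl⟩ := hXc hSbd
    -- W converges
    have hWtend : Tendsto (fun n => rsW a Z n ω) atTop (𝓝 (xl + s)) := by
      have := hxl.add hStend
      refine this.congr fun n => ?_
      simp [rsX]
    -- Z (n+1) converges
    have hZs : Tendsto (fun n => Z (n + 1) ω) atTop (𝓝 (Pl * (xl + s))) := by
      have hmul := hPtend.mul hWtend
      refine hmul.congr fun n => ?_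
      simp only [rsW]
      rw [← mul_assoc, mul_inv_cancel₀ (ne_of_gt (rsP_pos a n ω)), one_mul]
    have hZtend : Tendsto (fun n => Z n ω) atTop (𝓝 (Pl * (xl + s))) :=
      (tendsto_add_atTop_iff_nat 1).mp hZs
    refine ⟨Pl * (xl + s), ?_, hZtend⟩
    exact ge_of_tendsto' hZtend fun n => hZp n
  -- define the limit by choice
  refine ⟨fun ω => if h : ∃ zl : ℝ, 0 ≤ zl ∧ Tendsto (fun n => Z n ω) atTop (𝓝 zl)
      then h.choose else 0, ?_, ?_⟩
  · filter_upwards [hglobal] with ω hω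
    rw [dif_pos hω]
    exact hω.choose_spec.1
  · filter_upwards [hglobal] with ω hω
    rw [dif_pos hω]
    exact hω.choose_spec.2
end

section
/- Let (𝔉ₙ)_{n≥1} be a filtration, and let (aₙ)_{n≥1}, (cₙ)_{n≥1} be integrable real random variables and (Zₙ)_{n≥1} nonnegative integrable real random variables, all adapted to (𝔉ₙ). Write aₙ^- = max(0, −aₙ) and aₙ^+ = max(0, aₙ). Assume 𝔼[Z_{n+1} | 𝔉ₙ] ≤ (1 − aₙ)·Zₙ + cₙ almost surely for all n ≥ 1, that Σ_{n=1}^∞ aₙ^- < ∞ almost surely, that the series Σ_{n=1}^∞ cₙ converges almost surely to a finite limit, that aₙ^+·Zₙ is integrable for every n, and that Σ_{n=1}^∞ aₙ = +∞ almost surely. Then Zₙ → 0 almost surely. -/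
open MeasureTheory Filter Topology


lemma supermartingale_bddBelow_ae_tendsto
    {Ω : Type*} {m0 : MeasurableSpace Ω} {μ : Measure Ω} [IsProbabilityMeasure μ]
    {𝒢 : Filtration ℕ m0} {f : ℕ → Ω → ℝ} {R : ℝ} (hR : 0 ≤ R)
    (hf : Supermartingale f 𝒢 μ) (hbdd : ∀ n, ∀ᵐ ω ∂μ, -R ≤ f n ω) :
    ∀ᵐ ω ∂μ, ∃ l, Tendsto (fun n => f n ω) atTop (𝓝 l) := by
  have hint : ∀ n, Integrable (f n) μ := fun n => hf.integrable n
  have hmean : ∀ n, ∫ ω, f n ω ∂μ ≤ ∫ ω, f 0 ω ∂μ := by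
    intro n
    have h1 : ∫ ω, f n ω ∂μ = ∫ ω, (μ[f n|𝒢 0]) ω ∂μ := (integral_condExp (𝒢.le 0)).symm
    rw [h1]
    exact integral_mono_ae integrable_condExp (hint 0) (hf.condExp_ae_le (Nat.zero_le n))
  have habs : ∀ n, ∫ ω, |f n ω| ∂μ ≤ ∫ ω, f 0 ω ∂μ + 2 * R := by
    intro n
    have h1 : ∫ ω, |f n ω| ∂μ ≤ ∫ ω, (f n ω + 2 * R) ∂μ := by
      refine integral_mono_ae (hint n).abs ((hint n).add (integrable_const _)) ?_
      filter_upwards [hbdd n] with ω hω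
      rcases le_total 0 (f n ω) with h | h
      · rw [abs_of_nonneg h]; linarith
      · rw [abs_of_nonpos h]; linarith
    rw [integral_add (hint n) (integrable_const _), integral_const] at h1
    simp only [measure_univ, probReal_univ, smul_eq_mul, one_mul] at h1
    linarith [hmean n]
  set K : NNReal := (∫ ω, f 0 ω ∂μ + 2 * R).toNNReal with hK
  have hbddL1 : ∀ n, eLpNorm (-f n) 1 μ ≤ (K : ENNReal) := by
    intro n
    have h1 : eLpNorm (-f n) 1 μ = eLpNorm (f n) 1 μ := eLpNorm_neg _ _ _
    have h2 : eLpNorm (f n) 1 μ = ENNReal.ofReal (∫ ω, ‖f n ω‖ ∂μ) := by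
      rw [eLpNorm_one_eq_lintegral_enorm, ← ofReal_integral_norm_eq_lintegral_enorm (hint n)]
    rw [h1, h2]
    have : (K : ENNReal) = ENNReal.ofReal (∫ ω, f 0 ω ∂μ + 2 * R) := rfl
    rw [this]
    exact ENNReal.ofReal_le_ofReal (by simpa [Real.norm_eq_abs] using habs n)
  have hconv := (hf.neg.exists_ae_tendsto_of_bdd hbddL1)
  filter_upwards [hconv] with ω ⟨l, hl⟩
  refine ⟨-l, ?_⟩
  have : (fun n => f n ω) = fun n => -((-f) n ω) := by funext n; simp
  rw [this]
  exact hl.neg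


lemma prod_inv_facts (b : ℕ → ℝ) (hb : ∀ n, 0 ≤ b n) (hsum : Summable b) :
    ∃ β : ℝ, 0 < β ∧
      Tendsto (fun n => ∏ k ∈ Finset.range n, (1 + b k)⁻¹) atTop (𝓝 β) ∧
      (∀ n, β ≤ ∏ k ∈ Finset.range n, (1 + b k)⁻¹) := by
  set B : ℕ → ℝ := fun n => ∏ k ∈ Finset.range n, (1 + b k)⁻¹ with hB
  set P : ℕ → ℝ := fun n => ∏ k ∈ Finset.range n, (1 + b k) with hP
  have hfac : ∀ k, (0:ℝ) < 1 + b k := fun k => by linarith [hb k]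
  have hPpos : ∀ n, 0 < P n := fun n => Finset.prod_pos fun k _ => hfac k
  have hPmono : Monotone P := by
    apply monotone_nat_of_le_succ
    intro n
    have : P (n+1) = P n * (1 + b n) := Finset.prod_range_succ _ _
    nlinarith [hPpos n, hb n]
  have hPbdd : BddAbove (Set.range P) := by
    refine ⟨Real.exp (∑' k, b k), ?_⟩
    rintro x ⟨n, rfl⟩
    calc P n ≤ ∏ k ∈ Finset.range n, Real.exp (b k) :=
          Finset.prod_le_prod (fun k _ => (hfac k).le)
            (fun k _ => by linarith [Real.add_one_le_exp (b k)])
      _ = Real.exp (∑ k ∈ Finset.range n, b k) := (Real.exp_sum _ _).symm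
      _ ≤ Real.exp (∑' k, b k) := Real.exp_le_exp.mpr (Summable.sum_le_tsum _ (fun k _ => hb k) hsum)
  have hPlim : Tendsto P atTop (𝓝 (⨆ n, P n)) := tendsto_atTop_ciSup hPmono hPbdd
  have hppos : 0 < ⨆ n, P n := lt_of_lt_of_le (hPpos 0) (le_ciSup hPbdd 0)
  refine ⟨(⨆ n, P n)⁻¹, inv_pos.mpr hppos, ?_, ?_⟩
  · have : Tendsto (fun n => (P n)⁻¹) atTop (𝓝 (⨆ n, P n)⁻¹) :=
      hPlim.inv₀ (ne_of_gt hppos)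
    refine this.congr fun n => ?_
    simp only [hB, hP, ← Finset.prod_inv_distrib]
  · intro n
    have h1 : P n ≤ ⨆ m, P m := le_ciSup hPbdd n
    have : (⨆ m, P m)⁻¹ ≤ (P n)⁻¹ := by
      apply inv_anti₀ (hPpos n) h1
    calc (⨆ m, P m)⁻¹ ≤ (P n)⁻¹ := this
      _ = B n := by simp only [hB, hP, ← Finset.prod_inv_distrib]

lemma abel_conv (r : ℕ → ℝ) (hr : Antitone r) (hrnn : ∀ n, 0 ≤ r n)
    (hr0 : Tendsto r atTop (𝓝 0)) (c : ℕ → ℝ) {s : ℝ}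
    (hc : Tendsto (fun n => ∑ k ∈ Finset.range n, c k) atTop (𝓝 s)) :
    ∃ l, Tendsto (fun n => ∑ k ∈ Finset.range n, r k * c k) atTop (𝓝 l) := by
  set G : ℕ → ℝ := fun n => ∑ k ∈ Finset.range n, c k with hG
  obtain ⟨K, hK⟩ : BddAbove (Set.range fun n => |G n|) :=
    (hc.abs).bddAbove_range
  have hKb : ∀ n, |G n| ≤ K := fun n => hK ⟨n, rfl⟩
  have hK0 : 0 ≤ K := le_trans (abs_nonneg _) (hKb 0)
  -- summability of the telescoping differences
  have hrsub : Summable (fun i => r i - r (i+1)) := by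
    apply summable_of_sum_range_le (c := r 0) (fun i => by linarith [hr (Nat.le_succ i)])
    intro n
    rw [Finset.sum_range_sub' r n]
    linarith [hrnn n]
  have hu : Summable (fun i => (r i - r (i+1)) * G (i+1)) := by
    apply Summable.of_norm_bounded (hrsub.mul_right K)
    intro i
    rw [Real.norm_eq_abs, abs_mul]
    have h1 : |r i - r (i+1)| = r i - r (i+1) := abs_of_nonneg (by linarith [hr (Nat.le_succ i)])
    rw [h1]
    exact mul_le_mul_of_nonneg_left (hKb (i+1)) (by linarith [hr (Nat.le_succ i)])
  set t : ℝ := ∑' i, (r i - r (i+1)) * G (i+1) with ht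
  have hT : Tendsto (fun n => ∑ i ∈ Finset.range n, (r i - r (i+1)) * G (i+1)) atTop (𝓝 t) :=
    hu.hasSum.tendsto_sum_nat
  refine ⟨t, ?_⟩
  have hid : ∀ n, ∑ k ∈ Finset.range n, r k * c k
      = r (n-1) * G n - ∑ i ∈ Finset.range (n-1), (r (i+1) - r i) * G (i+1) := by
    intro n
    have := Finset.sum_range_by_parts r c n
    simpa [smul_eq_mul, hG] using this
  have hsub : Tendsto (fun n : ℕ => n - 1) atTop atTop := tendsto_sub_atTop_nat 1
  have h1 : Tendsto (fun n => r (n-1) * G n) atTop (𝓝 (0 * s)) :=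
    (hr0.comp hsub).mul hc
  have h2 : Tendsto (fun n => ∑ i ∈ Finset.range (n-1), (r (i+1) - r i) * G (i+1)) atTop (𝓝 (-t)) := by
    have hneg : Tendsto (fun n => -∑ i ∈ Finset.range n, (r i - r (i+1)) * G (i+1)) atTop (𝓝 (-t)) := hT.neg
    have := hneg.comp hsub
    refine this.congr fun n => ?_
    simp only [Function.comp]
    rw [← Finset.sum_neg_distrib]
    exact Finset.sum_congr rfl fun i _ => by ring
  have := h1.sub h2
  rw [zero_mul, sub_neg_eq_add, add_comm, add_zero] at this
  exact this.congr fun n => (hid n).symm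

theorem rs_aux {Ω : Type*} {m0 : MeasurableSpace Ω} {μ : Measure Ω} [IsProbabilityMeasure μ]
    (𝒢 : Filtration ℕ m0) (Y d e : ℕ → Ω → ℝ)
    (hYadp : ∀ n, StronglyMeasurable[𝒢 n] (Y n)) (hYint : ∀ n, Integrable (Y n) μ)
    (hdadp : ∀ n, StronglyMeasurable[𝒢 n] (d n)) (hdint : ∀ n, Integrable (d n) μ)
    (headp : ∀ n, StronglyMeasurable[𝒢 n] (e n)) (heint : ∀ n, Integrable (e n) μ)
    (hYnn : ∀ n, 0 ≤ᵐ[μ] Y n) (henn : ∀ n, 0 ≤ᵐ[μ] e n)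
    (hrec : ∀ n, μ[Y (n+1)|𝒢 n] ≤ᵐ[μ] fun ω => Y n ω - e n ω + d n ω)
    (hD : ∀ᵐ ω ∂μ, ∃ l, Tendsto (fun n => ∑ k ∈ Finset.range n, d k ω) atTop (𝓝 l)) :
    ∀ᵐ ω ∂μ, (∃ l, Tendsto (fun n => Y n ω) atTop (𝓝 l)) ∧ Summable (fun n => e n ω) := by
  classical
  set D : ℕ → Ω → ℝ := fun n ω => ∑ k ∈ Finset.range n, d k ω with hD_def
  set E : ℕ → Ω → ℝ := fun n ω => ∑ k ∈ Finset.range n, e k ω with hE_def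
  set M : ℕ → Ω → ℝ := fun n ω => Y n ω - D n ω + E n ω with hM_def
  -- measurability and integrability of partial sums
  have hDSM : ∀ n k, k ≤ n + 1 → StronglyMeasurable[𝒢 n] (D k) := by
    intro n k hk
    apply Finset.stronglyMeasurable_fun_sum
    intro j hj
    exact (hdadp j).mono (𝒢.mono (by have := Finset.mem_range.mp hj; omega))
  have hESM : ∀ n k, k ≤ n + 1 → StronglyMeasurable[𝒢 n] (E k) := by
    intro n k hk
    apply Finset.stronglyMeasurable_fun_sum
    intro j hj
    exact (headp j).mono (𝒢.mono (by have := Finset.mem_range.mp hj; omega))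
  have hMSM : ∀ n k, k ≤ n → StronglyMeasurable[𝒢 n] (M k) := by
    intro n k hk
    have hY : StronglyMeasurable[𝒢 n] (Y k) := (hYadp k).mono (𝒢.mono hk)
    exact (hY.sub (hDSM n k (by omega))).add (hESM n k (by omega))
  have hDint : ∀ n, Integrable (D n) μ := fun n => integrable_finset_sum _ fun k _ => hdint k
  have hEint : ∀ n, Integrable (E n) μ := fun n => integrable_finset_sum _ fun k _ => heint k
  have hMint : ∀ n, Integrable (M n) μ := fun n => ((hYint n).sub (hDint n)).add (hEint n)
  -- one-step supermartingale inequality for M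
  have hMone : ∀ n, μ[M (n+1)|𝒢 n] ≤ᵐ[μ] M n := by
    intro n
    have hsplit : M (n+1) = (Y (n+1) - D (n+1)) + E (n+1) := rfl
    have h1 : μ[M (n+1)|𝒢 n] =ᵐ[μ] μ[Y (n+1) - D (n+1)|𝒢 n] + μ[E (n+1)|𝒢 n] := by
      rw [hsplit]; exact condExp_add ((hYint (n+1)).sub (hDint (n+1))) (hEint (n+1)) _
    have h2 : μ[Y (n+1) - D (n+1)|𝒢 n] =ᵐ[μ] μ[Y (n+1)|𝒢 n] - μ[D (n+1)|𝒢 n] :=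
      condExp_sub (hYint (n+1)) (hDint (n+1)) _
    have h3 : μ[D (n+1)|𝒢 n] = D (n+1) :=
      condExp_of_stronglyMeasurable (𝒢.le n) (hDSM n (n+1) le_rfl) (hDint (n+1))
    have h4 : μ[E (n+1)|𝒢 n] = E (n+1) :=
      condExp_of_stronglyMeasurable (𝒢.le n) (hESM n (n+1) le_rfl) (hEint (n+1))
    filter_upwards [h1, h2, hrec n] with ω e1 e2 e5
    have hDs : D (n+1) ω = D n ω + d n ω := Finset.sum_range_succ _ _
    have hEs : E (n+1) ω = E n ω + e n ω := Finset.sum_range_succ _ _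
    have : (μ[M (n+1)|𝒢 n]) ω = (μ[Y (n+1)|𝒢 n]) ω - D (n+1) ω + E (n+1) ω := by
      rw [e1]; simp only [Pi.add_apply, Pi.sub_apply] at e2 ⊢; rw [e2, h3, h4]
    rw [this]
    simp only [hM_def, hDs, hEs]
    have : (μ[Y (n+1)|𝒢 n]) ω ≤ Y n ω - e n ω + d n ω := e5
    linarith
  -- the stopped processes
  set A : ℕ → ℕ → Set Ω := fun R n => {ω | ∀ k ≤ n+1, |D k ω| ≤ (R:ℝ)} with hA_def
  set X : ℕ → ℕ → Ω → ℝ := fun R n ω => M 0 ω +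
      ∑ k ∈ Finset.range n, (A R k).indicator (fun ω => M (k+1) ω - M k ω) ω with hX_def
  have hAmeas : ∀ R n, MeasurableSet[𝒢 n] (A R n) := by
    intro R n
    have : A R n = ⋂ k ∈ Set.Iic (n+1), {ω | |D k ω| ≤ (R:ℝ)} := by
      ext ω; simp [hA_def, Set.mem_iInter]
    rw [this]
    exact MeasurableSet.biInter (Set.to_countable _)
      (fun k hk => (measurable_abs.comp (hDSM n k hk).measurable) measurableSet_Iic)
  have hAmono : ∀ R k m, k ≤ m → A R m ⊆ A R k := by
    intro R k m hkm ω hω j hj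
    exact hω j (by omega)
  have hXadp : ∀ R n, StronglyMeasurable[𝒢 n] (X R n) := by
    intro R n
    apply ((hMSM n 0 (by omega)).add)
    apply Finset.stronglyMeasurable_fun_sum
    intro k hk
    have hk' : k < n := Finset.mem_range.mp hk
    have hMk : StronglyMeasurable[𝒢 n] (fun ω => M (k+1) ω - M k ω) :=
      (hMSM n (k+1) (by omega)).sub (hMSM n k (by omega))
    exact hMk.indicator (𝒢.mono hk'.le _ (hAmeas R k))
  have hXint : ∀ R n, Integrable (X R n) μ := by
    intro R n
    refine (hMint 0).add (integrable_finset_sum _ fun k _ => ?_)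
    exact ((hMint (k+1)).sub (hMint k)).indicator (𝒢.le k _ (hAmeas R k))
  have hXsucc : ∀ R n, X R (n+1) = X R n + (A R n).indicator (fun ω => M (n+1) ω - M n ω) := by
    intro R n
    funext ω
    simp only [hX_def, Pi.add_apply, Finset.sum_range_succ]
    ring
  have hXsuper : ∀ R, Supermartingale (X R) 𝒢 μ := by
    intro R
    refine supermartingale_nat (fun n => hXadp R n) (fun n => hXint R n) (fun n => ?_)
    have hint1 : Integrable ((A R n).indicator (fun ω => M (n+1) ω - M n ω)) μ :=
      ((hMint (n+1)).sub (hMint n)).indicator (𝒢.le n _ (hAmeas R n))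
    have h1 : μ[X R (n+1)|𝒢 n] =ᵐ[μ]
        μ[X R n|𝒢 n] + μ[(A R n).indicator (fun ω => M (n+1) ω - M n ω)|𝒢 n] := by
      rw [hXsucc R n]
      exact condExp_add (hXint R n) hint1 _
    have h2 : μ[X R n|𝒢 n] = X R n :=
      condExp_of_stronglyMeasurable (𝒢.le n) (hXadp R n) (hXint R n)
    have h3 : μ[(A R n).indicator (fun ω => M (n+1) ω - M n ω)|𝒢 n]
        =ᵐ[μ] (A R n).indicator (μ[(fun ω => M (n+1) ω - M n ω)|𝒢 n]) :=
      condExp_indicator ((hMint (n+1)).sub (hMint n)) (hAmeas R n)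
    have h2' : μ[M n|𝒢 n] = M n :=
      condExp_of_stronglyMeasurable (𝒢.le n) (hMSM n n le_rfl) (hMint n)
    have h4 : μ[(fun ω => M (n+1) ω - M n ω)|𝒢 n] =ᵐ[μ] μ[M (n+1)|𝒢 n] - M n := by
      have heq : (fun ω => M (n+1) ω - M n ω) = M (n+1) - M n := rfl
      rw [heq]
      calc μ[M (n+1) - M n|𝒢 n] =ᵐ[μ] μ[M (n+1)|𝒢 n] - μ[M n|𝒢 n] :=
            condExp_sub (hMint (n+1)) (hMint n) _
        _ = μ[M (n+1)|𝒢 n] - M n := by rw [h2']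
    filter_upwards [h1, h3, h4, hMone n] with ω e1 e3 e4 e5
    rw [e1]
    simp only [Pi.add_apply]
    rw [h2, e3]
    have hle : (A R n).indicator (μ[(fun ω => M (n+1) ω - M n ω)|𝒢 n]) ω ≤ 0 := by
      by_cases hω : ω ∈ A R n
      · rw [Set.indicator_of_mem hω, e4]
        simp only [Pi.sub_apply]
        linarith [e5]
      · rw [Set.indicator_of_notMem hω]
    linarith [hle]
  have hae : ∀ᵐ ω ∂μ, (∀ m, 0 ≤ Y m ω) ∧ (∀ m, 0 ≤ e m ω) :=
    (ae_all_iff.mpr hYnn).and (ae_all_iff.mpr henn)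
  have htel : ∀ R n ω, (∀ k, k < n → ω ∈ A R k) → X R n ω = M n ω := by
    intro R n
    induction n with
    | zero => intro ω _; simp [hX_def]
    | succ n ih =>
      intro ω hω
      have h1 : X R (n+1) ω = X R n ω + (A R n).indicator (fun ω => M (n+1) ω - M n ω) ω := by
        rw [hXsucc R n]; rfl
      rw [h1, ih ω (fun k hk => hω k (by omega)), Set.indicator_of_mem (hω n (by omega))]
      ring
  have hstop : ∀ R n ω, ∃ t, t ≤ n ∧ X R n ω = M t ω ∧ |D t ω| ≤ (R:ℝ) := by
    intro R n ω
    induction n with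
    | zero =>
      refine ⟨0, le_rfl, by simp [hX_def], ?_⟩
      simp only [hD_def, Finset.range_zero, Finset.sum_empty, abs_zero]
      exact Nat.cast_nonneg R
    | succ n ih =>
      by_cases hA : ω ∈ A R n
      · refine ⟨n+1, le_rfl, ?_, hA (n+1) le_rfl⟩
        exact htel R (n+1) ω (fun k hk => hAmono R k n (by omega) hA)
      · obtain ⟨t, ht, heq, hb⟩ := ih
        refine ⟨t, by omega, ?_, hb⟩
        have h1 : X R (n+1) ω = X R n ω + (A R n).indicator (fun ω => M (n+1) ω - M n ω) ω := by
          rw [hXsucc R n]; rfl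
        rw [h1, Set.indicator_of_notMem hA, heq]
        ring
  have hXlb : ∀ R n, ∀ᵐ ω ∂μ, -((R:ℕ):ℝ) ≤ X R n ω := by
    intro R n
    filter_upwards [hae] with ω hω
    obtain ⟨hY, he⟩ := hω
    obtain ⟨t, _, hXt, hDt⟩ := hstop R n ω
    have hEt : 0 ≤ E t ω := Finset.sum_nonneg fun k _ => he k
    have hMt : M t ω = Y t ω - D t ω + E t ω := rfl
    rw [hXt, hMt]
    have := abs_le.mp hDt
    linarith [hY t]
  have hXconv : ∀ R : ℕ, ∀ᵐ ω ∂μ, ∃ l, Tendsto (fun n => X R n ω) atTop (𝓝 l) := fun R =>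
    supermartingale_bddBelow_ae_tendsto (Nat.cast_nonneg R) (hXsuper R) (hXlb R)
  have hXae : ∀ᵐ ω ∂μ, ∀ R : ℕ, ∃ l, Tendsto (fun n => X R n ω) atTop (𝓝 l) :=
    ae_all_iff.mpr hXconv
  filter_upwards [hXae, hD, hae] with ω hX hDc hω
  obtain ⟨hY, he⟩ := hω
  obtain ⟨lD, hlD⟩ := hDc
  have hlD' : Tendsto (fun n => D n ω) atTop (𝓝 lD) := hlD
  obtain ⟨K, hK⟩ := (hlD'.abs).bddAbove_range
  set R : ℕ := ⌈K⌉₊ with hR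
  have hDb : ∀ n, |D n ω| ≤ (R:ℝ) := fun n => le_trans (hK ⟨n, rfl⟩) (Nat.le_ceil K)
  have hmem : ∀ k, ω ∈ A R k := fun k j hj => hDb j
  have hXM : ∀ n, X R n ω = M n ω := fun n => htel R n ω (fun k _ => hmem k)
  obtain ⟨l, hl⟩ := hX R
  have hM : Tendsto (fun n => M n ω) atTop (𝓝 l) := hl.congr fun n => hXM n
  have hYE : Tendsto (fun n => Y n ω + E n ω) atTop (𝓝 (l + lD)) := by
    have h := hM.add hlD'
    refine h.congr fun n => ?_
    have hMn : M n ω = Y n ω - D n ω + E n ω := rfl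
    rw [hMn]; ring
  have hEmono : Monotone (fun n => E n ω) := by
    apply monotone_nat_of_le_succ
    intro n
    have hEs : E (n+1) ω = E n ω + e n ω := Finset.sum_range_succ _ _
    rw [hEs]; linarith [he n]
  obtain ⟨U, hU⟩ := hYE.bddAbove_range
  have hEbdd : ∀ n, E n ω ≤ U :=
    fun n => le_trans (by linarith [hY n] : E n ω ≤ Y n ω + E n ω) (hU ⟨n, rfl⟩)
  have hEconv : Tendsto (fun n => E n ω) atTop (𝓝 (⨆ n, E n ω)) :=
    tendsto_atTop_ciSup hEmono ⟨U, by rintro x ⟨n, rfl⟩; exact hEbdd n⟩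
  refine ⟨⟨l + lD - ⨆ n, E n ω, ?_⟩, ?_⟩
  · have h := hYE.sub hEconv
    refine h.congr fun n => by ring
  · exact summable_of_sum_range_le (fun n => he n) (fun n => hEbdd n)


/-- Modified Robbins–Siegmund theorem, Part 2: if moreover `aₙ⁺·Zₙ` is integrable and
`Σ aₙ = +∞` almost surely, then `Zₙ → 0` almost surely. -/
theorem modified_robbins_siegmund_part2
    {Ω : Type*} {m0 : MeasurableSpace Ω} {μ : Measure Ω} [IsProbabilityMeasure μ]
    (ℱ : Filtration ℕ m0)
    (a c Z : ℕ → Ω → ℝ)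
    (haadapted : Adapted ℱ a) (hcadapted : Adapted ℱ c) (hZadapted : Adapted ℱ Z)
    (haint : ∀ n, Integrable (a n) μ) (hcint : ∀ n, Integrable (c n) μ)
    (hZint : ∀ n, Integrable (Z n) μ) (hZnonneg : ∀ n, 0 ≤ᵐ[μ] Z n)
    (hrec : ∀ n : ℕ, 1 ≤ n →
      μ[Z (n + 1) | ℱ n] ≤ᵐ[μ] fun ω => (1 - a n ω) * Z n ω + c n ω)
    (haminus : ∀ᵐ ω ∂μ, Summable fun n : ℕ => max 0 (-(a (n + 1) ω)))
    (hcsum : ∀ᵐ ω ∂μ, ∃ l : ℝ,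
      Tendsto (fun N => ∑ n ∈ Finset.Icc 1 N, c n ω) atTop (𝓝 l))
    (haplusZ : ∀ n, Integrable (fun ω => max 0 (a n ω) * Z n ω) μ)
    (hasum : ∀ᵐ ω ∂μ, Tendsto (fun N => ∑ n ∈ Finset.Icc 1 N, a n ω) atTop atTop) :
    ∀ᵐ ω ∂μ, Tendsto (fun n => Z n ω) atTop (𝓝 0) := by
  classical
  set 𝒢 : Filtration ℕ m0 :=
    ⟨fun n => ℱ (n+1), fun n m h => ℱ.mono (by omega), fun n => ℱ.le (n+1)⟩ with h𝒢
  set bf : ℕ → Ω → ℝ := fun n ω => max 0 (-(a (n+1) ω)) with hbf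
  set pf : ℕ → Ω → ℝ := fun n ω => max 0 (a (n+1) ω) with hpf
  set B : ℕ → Ω → ℝ := fun n ω => ∏ k ∈ Finset.range n, (1 + bf k ω)⁻¹ with hB
  set Y : ℕ → Ω → ℝ := fun n ω => B n ω * Z (n+1) ω with hY
  set d : ℕ → Ω → ℝ := fun n ω => B (n+1) ω * c (n+1) ω with hd
  set e : ℕ → Ω → ℝ := fun n ω => B (n+1) ω * (pf n ω * Z (n+1) ω) with he
  -- pointwise facts
  have hbnn : ∀ n ω, 0 ≤ bf n ω := fun n ω => le_max_left 0 _
  have hpnn : ∀ n ω, 0 ≤ pf n ω := fun n ω => le_max_left 0 _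
  have hfacpos : ∀ n ω, (0:ℝ) < 1 + bf n ω := fun n ω => by linarith [hbnn n ω]
  have hBpos : ∀ n ω, 0 < B n ω := fun n ω =>
    Finset.prod_pos fun k _ => inv_pos.mpr (hfacpos k ω)
  have hBle1 : ∀ n ω, B n ω ≤ 1 := by
    intro n ω
    apply Finset.prod_le_one (fun k _ => (inv_pos.mpr (hfacpos k ω)).le)
    intro k _
    calc (1 + bf k ω)⁻¹ ≤ 1⁻¹ := inv_anti₀ one_pos (by linarith [hbnn k ω])
      _ = 1 := inv_one
  have hBsucc : ∀ n ω, B (n+1) ω = B n ω * (1 + bf n ω)⁻¹ := fun n ω =>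
    Finset.prod_range_succ _ _
  have hBanti : ∀ ω, Antitone (fun n => B n ω) := by
    intro ω
    apply antitone_nat_of_succ_le
    intro n
    rw [hBsucc n ω]
    calc B n ω * (1 + bf n ω)⁻¹ ≤ B n ω * 1 := by
          apply mul_le_mul_of_nonneg_left _ (hBpos n ω).le
          calc (1 + bf n ω)⁻¹ ≤ 1⁻¹ := inv_anti₀ one_pos (by linarith [hbnn n ω])
            _ = 1 := inv_one
      _ = B n ω := mul_one _
  have ha_eq : ∀ n ω, a (n+1) ω = pf n ω - bf n ω := by
    intro n ω
    simp only [hpf, hbf]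
    rcases le_total 0 (a (n+1) ω) with h | h
    · rw [max_eq_right h, max_eq_left (by linarith : -(a (n+1) ω) ≤ 0)]; ring
    · rw [max_eq_left h, max_eq_right (by linarith : (0:ℝ) ≤ -(a (n+1) ω))]; ring
  -- measurability
  have hbfSM : ∀ n, StronglyMeasurable[𝒢 n] (bf n) := by
    intro n
    have houter : Measurable fun x : ℝ => max 0 (-x) := measurable_const.max measurable_neg
    exact (houter.comp (haadapted (n+1))).stronglyMeasurable
  have hpfSM : ∀ n, StronglyMeasurable[𝒢 n] (pf n) := by
    intro n
    have houter : Measurable fun x : ℝ => max 0 x := measurable_const.max measurable_id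
    exact (houter.comp (haadapted (n+1))).stronglyMeasurable
  have hBSM : ∀ n k, k ≤ n + 1 → StronglyMeasurable[𝒢 n] (B k) := by
    intro n k hk
    apply Finset.stronglyMeasurable_fun_prod
    intro j hj
    have hj' : j ≤ n := by have := Finset.mem_range.mp hj; omega
    have hbfj : Measurable[𝒢 n] (bf j) := ((hbfSM j).mono (𝒢.mono hj')).measurable
    have houter : Measurable fun x : ℝ => (1 + x)⁻¹ := (measurable_const.add measurable_id).inv
    exact (houter.comp hbfj).stronglyMeasurable
  have hYSM : ∀ n, StronglyMeasurable[𝒢 n] (Y n) := fun n =>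
    (hBSM n n (by omega)).mul (hZadapted (n+1)).stronglyMeasurable
  have hdSM : ∀ n, StronglyMeasurable[𝒢 n] (d n) := fun n =>
    (hBSM n (n+1) le_rfl).mul (hcadapted (n+1)).stronglyMeasurable
  have heSM : ∀ n, StronglyMeasurable[𝒢 n] (e n) := fun n =>
    (hBSM n (n+1) le_rfl).mul ((hpfSM n).mul (hZadapted (n+1)).stronglyMeasurable)
  -- integrability
  have hBnorm : ∀ n ω, ‖B n ω‖ ≤ 1 := by
    intro n ω
    rw [Real.norm_eq_abs, abs_of_pos (hBpos n ω)]
    exact hBle1 n ω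
  have hBaesm : ∀ n, AEStronglyMeasurable (B n) μ := fun n =>
    ((hBSM n n (by omega)).mono (𝒢.le n)).aestronglyMeasurable
  have hYint : ∀ n, Integrable (Y n) μ := fun n =>
    (hZint (n+1)).bdd_mul (hBaesm n) (ae_of_all _ fun ω => hBnorm n ω)
  have hdint : ∀ n, Integrable (d n) μ := fun n =>
    (hcint (n+1)).bdd_mul (hBaesm (n+1)) (ae_of_all _ fun ω => hBnorm (n+1) ω)
  have heint : ∀ n, Integrable (e n) μ := by
    intro n
    refine (haplusZ (n+1)).mono (((heSM n).mono (𝒢.le n)).aestronglyMeasurable) ?_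
    filter_upwards with ω
    simp only [he, norm_mul]
    refine mul_le_of_le_one_left (by positivity) ?_
    · exact hBnorm (n+1) ω
  -- nonnegativity
  have hYnnae : ∀ n, 0 ≤ᵐ[μ] Y n := by
    intro n
    filter_upwards [hZnonneg (n+1)] with ω hz
    exact mul_nonneg (hBpos n ω).le hz
  have hennae : ∀ n, 0 ≤ᵐ[μ] e n := by
    intro n
    filter_upwards [hZnonneg (n+1)] with ω hz
    exact mul_nonneg (hBpos (n+1) ω).le (mul_nonneg (hpnn n ω) hz)
  -- the key recursion
  have hrecY : ∀ n, μ[Y (n+1)|𝒢 n] ≤ᵐ[μ] fun ω => Y n ω - e n ω + d n ω := by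
    intro n
    have hYmul : Y (n+1) = B (n+1) * Z (n+2) := rfl
    have h1 : μ[B (n+1) * Z (n+2)|𝒢 n] =ᵐ[μ] B (n+1) * μ[Z (n+2)|𝒢 n] :=
      condExp_mul_of_stronglyMeasurable_left (hBSM n (n+1) le_rfl)
        (by exact hYint (n+1)) (hZint (n+2))
    have h2 : μ[Z (n+2)|𝒢 n] ≤ᵐ[μ]
        fun ω => (1 - a (n+1) ω) * Z (n+1) ω + c (n+1) ω := hrec (n+1) (by omega)
    filter_upwards [h1, h2] with ω e1 e2
    have e1' : (μ[Y (n+1)|𝒢 n]) ω = B (n+1) ω * (μ[Z (n+2)|𝒢 n]) ω := by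
      rw [hYmul]; simpa using e1
    rw [e1']
    calc B (n+1) ω * (μ[Z (n+2)|𝒢 n]) ω
        ≤ B (n+1) ω * ((1 - a (n+1) ω) * Z (n+1) ω + c (n+1) ω) :=
          mul_le_mul_of_nonneg_left e2 (hBpos (n+1) ω).le
      _ = Y n ω - e n ω + d n ω := by
          have h5 : B (n+1) ω * (1 + bf n ω) = B n ω := by
            rw [hBsucc n ω, mul_assoc, inv_mul_cancel₀ (ne_of_gt (hfacpos n ω)), mul_one]
          have h6 := ha_eq n ω
          simp only [hY, he, hd]
          rw [h6, ← h5]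
          ring
  -- convergence of ∑ d pathwise (Abel)
  have hDconv : ∀ᵐ ω ∂μ, ∃ l, Tendsto (fun n => ∑ k ∈ Finset.range n, d k ω) atTop (𝓝 l) := by
    filter_upwards [haminus, hcsum] with ω hb hc
    obtain ⟨s, hs⟩ := hc
    have hb' : Summable (fun n => bf n ω) := hb
    have hIcc : ∀ (f : ℕ → Ω → ℝ) (N : ℕ),
        ∑ n ∈ Finset.Icc 1 N, f n ω = ∑ k ∈ Finset.range N, f (k+1) ω := by
      intro f N
      rw [← Finset.Ico_add_one_right_eq_Icc, Finset.sum_Ico_eq_sum_range]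
      exact Finset.sum_congr (by norm_num) fun i _ => by rw [add_comm]
    have hcs : Tendsto (fun N => ∑ k ∈ Finset.range N, c (k+1) ω) atTop (𝓝 s) :=
      hs.congr fun N => hIcc c N
    obtain ⟨β, hβpos, hBlim, hβle⟩ := prod_inv_facts (fun n => bf n ω) (fun n => hbnn n ω) hb'
    have hBlim' : Tendsto (fun n => B n ω) atTop (𝓝 β) := hBlim
    have hβle' : ∀ n, β ≤ B n ω := hβle
    set r : ℕ → ℝ := fun k => B (k+1) ω - β with hr
    have hranti : Antitone r := fun m n h =>
      sub_le_sub_right (hBanti ω (Nat.add_le_add_right h 1)) β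
    have hrnn : ∀ k, 0 ≤ r k := fun k => sub_nonneg.mpr (hβle' (k+1))
    have hr0 : Tendsto r atTop (𝓝 0) := by
      have h := (hBlim'.comp (tendsto_add_atTop_nat 1)).sub_const β
      simpa using h
    obtain ⟨l1, hl1⟩ := abel_conv r hranti hrnn hr0 (fun k => c (k+1) ω) hcs
    refine ⟨l1 + β * s, ?_⟩
    have h := hl1.add (hcs.const_mul β)
    refine h.congr fun n => ?_
    rw [Finset.mul_sum, ← Finset.sum_add_distrib]
    refine Finset.sum_congr rfl fun k _ => ?_
    show r k * c (k+1) ω + β * c (k+1) ω = d k ω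
    simp only [hd, hr]
    ring
  -- main almost-supermartingale result
  have hmain := rs_aux 𝒢 Y d e hYSM hYint hdSM hdint heSM heint hYnnae hennae hrecY hDconv
  have hZnn' : ∀ᵐ ω ∂μ, ∀ n, 0 ≤ Z n ω := ae_all_iff.mpr hZnonneg
  filter_upwards [hmain, haminus, hasum, hZnn'] with ω hYe hb hdiv hZnn
  obtain ⟨⟨y, hy⟩, hesum⟩ := hYe
  have hb' : Summable (fun n => bf n ω) := hb
  obtain ⟨β, hβpos, hBlim, hβle⟩ := prod_inv_facts (fun n => bf n ω) (fun n => hbnn n ω) hb'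
  have hBlim' : Tendsto (fun n => B n ω) atTop (𝓝 β) := hBlim
  have hβle' : ∀ n, β ≤ B n ω := hβle
  have hZt : Tendsto (fun n => Z (n+1) ω) atTop (𝓝 (y / β)) := by
    have h := hy.div hBlim' (ne_of_gt hβpos)
    refine h.congr fun n => ?_
    show Y n ω / B n ω = Z (n+1) ω
    simp only [hY]
    exact mul_div_cancel_left₀ _ (ne_of_gt (hBpos n ω))
  have hznn : 0 ≤ y / β :=
    le_of_tendsto_of_tendsto' tendsto_const_nhds hZt (fun n => hZnn (n+1))
  by_cases hz : y / β = 0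
  · rw [hz] at hZt
    exact (tendsto_add_atTop_iff_nat 1).mp hZt
  · exfalso
    have hzpos : 0 < y / β := lt_of_le_of_ne hznn (Ne.symm hz)
    set z : ℝ := y / β with hzdef
    have hev : ∀ᶠ n in atTop, z / 2 < Z (n+1) ω :=
      hZt.eventually (eventually_gt_nhds (by linarith))
    obtain ⟨N, hN⟩ := eventually_atTop.mp hev
    have hesum' : Summable (fun k => e (k + N) ω) := (summable_nat_add_iff N).mpr hesum
    have hpfsum : Summable (fun k => pf (k + N) ω) := by
      refine Summable.of_nonneg_of_le (fun k => hpnn _ ω) (fun k => ?_)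
        (hesum'.mul_left (2 / (β * z)))
      have hZge : z / 2 ≤ Z (k+N+1) ω := (hN (k+N) (by omega)).le
      have hBge : β ≤ B (k+N+1) ω := hβle' _
      have t1 : β * (z/2) ≤ B (k+N+1) ω * Z (k+N+1) ω :=
        mul_le_mul hBge hZge (by linarith) (le_trans hβpos.le hBge)
      have t2 := mul_le_mul_of_nonneg_right t1 (hpnn (k+N) ω)
      have h1 : β * (z/2) * pf (k+N) ω ≤ e (k+N) ω := by
        simp only [he]
        calc β * (z/2) * pf (k+N) ω ≤ B (k+N+1) ω * Z (k+N+1) ω * pf (k+N) ω := t2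
          _ = B (k+N+1) ω * (pf (k+N) ω * Z (k+N+1) ω) := by ring
      have h2 : (2/(β*z)) * (β * (z/2) * pf (k+N) ω) = pf (k+N) ω := by
        field_simp
      calc pf (k+N) ω = (2/(β*z)) * (β * (z/2) * pf (k+N) ω) := h2.symm
        _ ≤ (2/(β*z)) * e (k+N) ω := mul_le_mul_of_nonneg_left h1 (by positivity)
    have hpfsum' : Summable (fun k => pf k ω) := (summable_nat_add_iff N).mp hpfsum
    have hIcc : ∀ (N : ℕ),
        ∑ n ∈ Finset.Icc 1 N, a n ω = ∑ k ∈ Finset.range N, a (k+1) ω := by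
      intro N
      rw [← Finset.Ico_add_one_right_eq_Icc, Finset.sum_Ico_eq_sum_range]
      exact Finset.sum_congr (by norm_num) fun i _ => by rw [add_comm]
    have hdiv' : Tendsto (fun n => ∑ k ∈ Finset.range n, a (k+1) ω) atTop atTop :=
      hdiv.congr fun N => hIcc N
    have hub : ∀ n, ∑ k ∈ Finset.range n, a (k+1) ω ≤ ∑' k, pf k ω := by
      intro n
      have h1 : ∑ k ∈ Finset.range n, a (k+1) ω ≤ ∑ k ∈ Finset.range n, pf k ω := by
        apply Finset.sum_le_sum
        intro k _
        rw [ha_eq k ω]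
        linarith [hbnn k ω]
      exact h1.trans (Summable.sum_le_tsum _ (fun k _ => hpnn k ω) hpfsum')
    obtain ⟨n, hn⟩ := (hdiv'.eventually_gt_atTop (∑' k, pf k ω)).exists
    exact absurd (hub n) (not_le.mpr hn)
end

section
/- Let (𝔉ₙ)_{n≥1} be a filtration, and let (aₙ)_{n≥1}, (cₙ)_{n≥1} be integrable real random variables and (Zₙ)_{n≥1} nonnegative integrable real random variables, all adapted to (𝔉ₙ). Write aₙ^+ = max(0, aₙ). Assume 𝔼[Z_{n+1} | 𝔉ₙ] ≤ (1 − aₙ)·Zₙ + cₙ almost surely for all n ≥ 1 and that aₙ^+·Zₙ is integrable for every n. Suppose there exist constants c > 0 and β with 0 < β < c such that aₙ ≥ c/n almost surely for every n ≥ 1, and the series Σ_{n=1}^∞ n^β·cₙ converges almost surely to a finite limit. Then n^β·Zₙ → 0 almost surely as n → ∞. -/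
open MeasureTheory Filter Topology

lemma aux_exp_neg_le {t : ℝ} (h0 : 0 ≤ t) (h1 : t ≤ 1) : Real.exp (-t) ≤ 1 - t/2 := by
  have h2 := Real.add_one_le_exp t
  have h3 : 0 < Real.exp t := Real.exp_pos t
  rw [Real.exp_neg]
  rw [inv_le_iff_one_le_mul₀ h3]
  nlinarith

lemma aux_key_coef {β C ε x : ℝ} (hβ0 : 0 < β) (hε : C = β + ε) (hεpos : 0 < ε)
    (hx2 : 2 ≤ x) (hxC : C ≤ x) (hxβ : 2*β/ε + 1 ≤ x) (hxε : ε/2 ≤ x) :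
    x ^ β * (1 - C/x) ≤ (1 - ε/(4*x)) * (x-1) ^ β := by
  have hx0 : (0:ℝ) < x := by linarith
  have hx1 : (0:ℝ) < x - 1 := by linarith
  have hsplit : x ^ β = (x-1) ^ β * (x/(x-1)) ^ β := by
    rw [← Real.mul_rpow (le_of_lt hx1) (by positivity)]
    congr 1
    field_simp
  have h1 : (x/(x-1)) ^ β ≤ Real.exp (β/(x-1)) := by
    have : x/(x-1) ≤ Real.exp (1/(x-1)) := by
      have := Real.add_one_le_exp (1/(x-1))
      have hx : x/(x-1) = 1/(x-1) + 1 := by field_simp; ring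
      linarith [hx ▸ this]
    calc (x/(x-1)) ^ β ≤ (Real.exp (1/(x-1))) ^ β :=
          Real.rpow_le_rpow (by positivity) this hβ0.le
      _ = Real.exp (1/(x-1) * β) := (Real.exp_mul _ _).symm
      _ = Real.exp (β/(x-1)) := by ring_nf
  have h2 : 1 - C/x ≤ Real.exp (-(C/x)) := by
    have := Real.add_one_le_exp (-(C/x)); linarith
  have hCx : 0 ≤ 1 - C/x := by
    rw [sub_nonneg, div_le_one hx0]; exact hxC
  have h3 : (x/(x-1)) ^ β * (1 - C/x) ≤ Real.exp (β/(x-1) - C/x) := by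
    calc (x/(x-1)) ^ β * (1 - C/x) ≤ Real.exp (β/(x-1)) * Real.exp (-(C/x)) :=
          mul_le_mul h1 h2 hCx (Real.exp_pos _).le
      _ = Real.exp (β/(x-1) - C/x) := by rw [← Real.exp_add]; ring_nf
  have h4 : β/(x-1) - C/x ≤ -(ε/(2*x)) := by
    have hεx : ε * x ≥ 2*β + ε := by
      have := (div_le_iff₀ hεpos).mp (by linarith : 2*β/ε ≤ x - 1)
      nlinarith
    have heq : β/(x-1) - C/x + ε/(2*x)
        = (β*(2*x) - (2*C - ε)*(x-1)) / (2*x*(x-1)) := by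
      field_simp; ring
    have hnum : β*(2*x) - (2*C - ε)*(x-1) ≤ 0 := by nlinarith
    have := div_nonpos_of_nonpos_of_nonneg hnum (by positivity : (0:ℝ) ≤ 2*x*(x-1))
    linarith [heq ▸ this]
  have h5 : Real.exp (β/(x-1) - C/x) ≤ 1 - ε/(4*x) := by
    have ht0 : 0 ≤ ε/(2*x) := by positivity
    have ht1 : ε/(2*x) ≤ 1 := by
      rw [div_le_one (by positivity)]; linarith
    have := aux_exp_neg_le ht0 ht1
    have hmono := Real.exp_le_exp.mpr h4
    have heq : ε/(2*x)/2 = ε/(4*x) := by ring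
    calc Real.exp (β/(x-1) - C/x) ≤ Real.exp (-(ε/(2*x))) := hmono
      _ ≤ 1 - ε/(2*x)/2 := this
      _ = 1 - ε/(4*x) := by rw [heq]
  calc x ^ β * (1 - C/x) = (x-1) ^ β * ((x/(x-1)) ^ β * (1 - C/x)) := by
        rw [hsplit]; ring
    _ ≤ (x-1) ^ β * (1 - ε/(4*x)) := by
        apply mul_le_mul_of_nonneg_left (h3.trans h5) (by positivity)
    _ = (1 - ε/(4*x)) * (x-1) ^ β := by ring

lemma aux_stopped_rep (g : ℕ → ℝ) (P : ℕ → Prop) (ξ : ℕ → ℝ)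
    (hξ1 : ∀ k, (∀ j ≤ k, P j) → ξ k = 1) (hξ0 : ∀ k, ¬(∀ j ≤ k, P j) → ξ k = 0) (n : ℕ) :
    ∃ i ≤ n, g 0 + ∑ k ∈ Finset.range n, ξ k * (g (k+1) - g k) = g i ∧
      (∀ j < i, P j) ∧ (i < n → ¬ P i) := by
  induction n with
  | zero => exact ⟨0, le_rfl, by simp, by omega, by omega⟩
  | succ n ih =>
    obtain ⟨i, hin, heq, hP, hfail⟩ := ih
    rcases lt_or_eq_of_le hin with hlt | rfl
    · have h0 : ξ n = 0 := by
        refine hξ0 n fun hall => (hfail hlt) (hall i hin)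
      refine ⟨i, by omega, ?_, hP, fun _ => hfail hlt⟩
      rw [Finset.sum_range_succ, h0]
      linarith [heq]
    · by_cases hall : ∀ j ≤ i, P j
      · refine ⟨i+1, by omega, ?_, fun j hj => hall j (by omega), by omega⟩
        rw [Finset.sum_range_succ, hξ1 i hall]
        linarith [heq]
      · have h0 : ξ i = 0 := hξ0 i hall
        have hPi : ¬ P i := by
          push_neg at hall
          obtain ⟨j, hj, hPj⟩ := hall
          rcases lt_or_eq_of_le hj with hjlt | rfl
          · exact absurd (hP j hjlt) hPj
          · exact hPj
        refine ⟨i, by omega, ?_, hP, fun _ => hPi⟩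
        rw [Finset.sum_range_succ, h0]
        linarith [heq]

/-- Modified Robbins–Siegmund theorem, Part 3 (rate statement): if `aₙ ≥ c/n` almost
surely with `0 < β < c`, `aₙ⁺·Zₙ` is integrable, and `Σ n^β·cₙ` converges almost
surely, then `n^β·Zₙ → 0` almost surely. -/
theorem modified_robbins_siegmund_part3
    {Ω : Type*} {m0 : MeasurableSpace Ω} {μ : Measure Ω} [IsProbabilityMeasure μ]
    (ℱ : Filtration ℕ m0)
    (a c Z : ℕ → Ω → ℝ)
    (haadapted : Adapted ℱ a) (hcadapted : Adapted ℱ c) (hZadapted : Adapted ℱ Z)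
    (haint : ∀ n, Integrable (a n) μ) (hcint : ∀ n, Integrable (c n) μ)
    (hZint : ∀ n, Integrable (Z n) μ) (hZnonneg : ∀ n, 0 ≤ᵐ[μ] Z n)
    (hrec : ∀ n : ℕ, 1 ≤ n →
      μ[Z (n + 1) | ℱ n] ≤ᵐ[μ] fun ω => (1 - a n ω) * Z n ω + c n ω)
    (haplusZ : ∀ n, Integrable (fun ω => max 0 (a n ω) * Z n ω) μ)
    (C β : ℝ) (hβ0 : 0 < β) (hβC : β < C)
    (halow : ∀ n : ℕ, 1 ≤ n → ∀ᵐ ω ∂μ, C / n ≤ a n ω)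
    (hcsum : ∀ᵐ ω ∂μ, ∃ l : ℝ,
      Tendsto (fun N : ℕ => ∑ n ∈ Finset.Icc 1 N, (n : ℝ) ^ β * c n ω) atTop (𝓝 l)) :
    ∀ᵐ ω ∂μ, Tendsto (fun n : ℕ => (n : ℝ) ^ β * Z n ω) atTop (𝓝 0) := by
  classical
  set ε : ℝ := C - β with hεdef
  have hεpos : 0 < ε := by rw [hεdef]; linarith
  have hεC : C = β + ε := by rw [hεdef]; ring
  -- choose threshold n₁
  obtain ⟨m₀, hm₀⟩ := exists_nat_ge (max (max C (2*β/ε + 1)) (ε/2))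
  set n₁ : ℕ := max m₀ 2 with hn₁def
  have hn₁2 : 2 ≤ n₁ := le_max_right _ _
  have hn₁1 : 1 ≤ n₁ := by omega
  have hm₀n₁ : (m₀:ℝ) ≤ (n₁:ℝ) := by exact_mod_cast le_max_left m₀ 2
  have hn₁C : C ≤ (n₁:ℝ) := le_trans (le_trans (le_max_left _ _) (le_max_left _ _)) (hm₀.trans hm₀n₁)
  have hn₁β : 2*β/ε + 1 ≤ (n₁:ℝ) :=
    le_trans (le_trans (le_max_right _ _) (le_max_left _ _)) (hm₀.trans hm₀n₁)
  have hn₁ε : ε/2 ≤ (n₁:ℝ) := le_trans (le_max_right _ _) (hm₀.trans hm₀n₁)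
  -- the processes
  set W : ℕ → Ω → ℝ := fun n ω => ((n:ℝ) - 1) ^ β * Z n ω with hWdef
  set d : ℕ → Ω → ℝ := fun n ω => (n:ℝ) ^ β * c n ω with hddef
  set S : ℕ → Ω → ℝ := fun n ω => ∑ k ∈ Finset.Ico n₁ n, d k ω with hSdef
  set T : ℕ → Ω → ℝ := fun n ω => ∑ k ∈ Finset.Ico n₁ n, ε/(4*(k:ℝ)) * W k ω with hTdef
  set X : ℕ → Ω → ℝ := fun n ω => W n ω - S n ω + T n ω with hXdef
  -- basic integrability and measurability
  have hWint : ∀ n, Integrable (W n) μ := fun n => (hZint n).const_mul _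
  have hdint : ∀ n, Integrable (d n) μ := fun n => (hcint n).const_mul _
  have hSint : ∀ n, Integrable (S n) μ := fun n => integrable_finset_sum _ fun k _ => hdint k
  have hTint : ∀ n, Integrable (T n) μ :=
    fun n => integrable_finset_sum _ fun k _ => (hWint k).const_mul _
  have hXint : ∀ n, Integrable (X n) μ := fun n => ((hWint n).sub (hSint n)).add (hTint n)
  have hWsm : ∀ n, StronglyMeasurable[ℱ n] (W n) :=
    fun n => stronglyMeasurable_const.mul (hZadapted n).stronglyMeasurable
  have hdsm : ∀ n, StronglyMeasurable[ℱ n] (d n) :=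
    fun n => stronglyMeasurable_const.mul (hcadapted n).stronglyMeasurable
  have hSsm : ∀ m n, n ≤ m + 1 → StronglyMeasurable[ℱ m] (S n) := by
    intro m n h
    refine Finset.stronglyMeasurable_fun_sum _ fun k hk => (hdsm k).mono (ℱ.mono ?_)
    have := (Finset.mem_Ico.mp hk).2
    omega
  have hTsm : ∀ m n, n ≤ m + 1 → StronglyMeasurable[ℱ m] (T n) := by
    intro m n h
    refine Finset.stronglyMeasurable_fun_sum _ fun k hk =>
      stronglyMeasurable_const.mul ((hWsm k).mono (ℱ.mono ?_))
    have := (Finset.mem_Ico.mp hk).2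
    omega
  have hXsm : ∀ n, StronglyMeasurable[ℱ n] (X n) :=
    fun n => ((hWsm n).sub (hSsm n n (by omega))).add (hTsm n n (by omega))
  -- the one-step supermartingale inequality
  have hstep : ∀ n, n₁ ≤ n → μ[X (n+1)|ℱ n] ≤ᵐ[μ] X n := by
    intro n hn
    have hn1 : 1 ≤ n := le_trans hn₁1 hn
    have hn2 : (2:ℝ) ≤ (n:ℝ) := by exact_mod_cast le_trans hn₁2 hn
    have hnn₁ : (n₁:ℝ) ≤ (n:ℝ) := by exact_mod_cast hn
    have hTSsm : StronglyMeasurable[ℱ n] (fun ω => T (n+1) ω - S (n+1) ω) :=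
      (hTsm n (n+1) le_rfl).sub (hSsm n (n+1) le_rfl)
    have hTSint : Integrable (fun ω => T (n+1) ω - S (n+1) ω) μ :=
      (hTint (n+1)).sub (hSint (n+1))
    have e1 : X (n+1) = W (n+1) + fun ω => T (n+1) ω - S (n+1) ω := by
      funext ω; simp only [hXdef, Pi.add_apply]; ring
    have e2 : μ[X (n+1)|ℱ n] =ᵐ[μ] μ[W (n+1)|ℱ n] + fun ω => T (n+1) ω - S (n+1) ω := by
      rw [e1]
      refine (condExp_add (hWint (n+1)) hTSint (ℱ n)).trans ?_
      rw [condExp_of_stronglyMeasurable (ℱ.le n) hTSsm hTSint]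
    have hWsmul : W (n+1) = ((n:ℝ) ^ β) • Z (n+1) := by
      funext ω
      have hc : ((n+1:ℕ):ℝ) - 1 = (n:ℝ) := by push_cast; ring
      simp only [hWdef, Pi.smul_apply, smul_eq_mul, hc]
    have e4 : μ[W (n+1)|ℱ n] =ᵐ[μ] ((n:ℝ) ^ β) • μ[Z (n+1)|ℱ n] := by
      rw [hWsmul]; exact condExp_smul _ _ _
    have hβn : (0:ℝ) ≤ (n:ℝ) ^ β := Real.rpow_nonneg (by positivity) _
    have hcoef : (n:ℝ) ^ β * (1 - C/(n:ℝ)) ≤ (1 - ε/(4*(n:ℝ))) * ((n:ℝ)-1) ^ β :=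
      aux_key_coef hβ0 hεC hεpos hn2 (hn₁C.trans hnn₁) (hn₁β.trans hnn₁) (hn₁ε.trans hnn₁)
    -- combine everything pointwise
    filter_upwards [e2, e4, hrec n hn1, halow n hn1, hZnonneg n] with ω hω2 hω4 hω5 hω6 hω7
    have hω7' : (0:ℝ) ≤ Z n ω := hω7
    rw [hω2]
    simp only [Pi.add_apply]
    rw [hω4]
    simp only [Pi.smul_apply, smul_eq_mul]
    have step1 : (n:ℝ) ^ β * (μ[Z (n+1)|ℱ n]) ω
        ≤ (n:ℝ) ^ β * ((1 - a n ω) * Z n ω + c n ω) := mul_le_mul_of_nonneg_left hω5 hβn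
    have chain : (n:ℝ) ^ β * (1 - a n ω) ≤ (1 - ε/(4*(n:ℝ))) * ((n:ℝ)-1) ^ β := by
      refine le_trans (mul_le_mul_of_nonneg_left (by linarith : 1 - a n ω ≤ 1 - C/(n:ℝ)) hβn)
        hcoef
    have hZchain := mul_le_mul_of_nonneg_right chain hω7'
    have expand : (n:ℝ) ^ β * ((1 - a n ω) * Z n ω + c n ω)
        = ((n:ℝ) ^ β * (1 - a n ω)) * Z n ω + (n:ℝ) ^ β * c n ω := by ring
    have hT1 : T (n+1) ω = T n ω + ε/(4*(n:ℝ)) * W n ω := by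
      simp only [hTdef]
      exact Finset.sum_Ico_succ_top hn _
    have hS1 : S (n+1) ω = S n ω + d n ω := by
      simp only [hSdef]
      exact Finset.sum_Ico_succ_top hn _
    have hXval : X n ω = W n ω - S n ω + T n ω := rfl
    have hdval : d n ω = (n:ℝ) ^ β * c n ω := rfl
    have hWval : ((n:ℝ) - 1) ^ β * Z n ω = W n ω := rfl
    have hprod : ε/(4*(n:ℝ)) * (((n:ℝ) - 1) ^ β * Z n ω) = ε/(4*(n:ℝ)) * W n ω :=
      congrArg (fun z => ε/(4*(n:ℝ)) * z) hWval
    linarith [step1, hZchain, expand, hT1, hS1, hXval, hdval, hWval, hprod]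
  -- the shifted filtration and process
  set 𝒢 : Filtration ℕ m0 :=
    { seq := fun i => ℱ (n₁ + i)
      mono' := fun i j hij => ℱ.mono (by omega)
      le' := fun i => ℱ.le _ } with h𝒢def
  set fs : ℕ → Ω → ℝ := fun i => X (n₁ + i) with hfsdef
  have hfadp : StronglyAdapted 𝒢 fs := fun i => hXsm (n₁ + i)
  have hfint : ∀ i, Integrable (fs i) μ := fun i => hXint (n₁ + i)
  have hfsuper : Supermartingale fs 𝒢 μ := by
    refine supermartingale_nat hfadp hfint fun i => ?_
    exact hstep (n₁ + i) (Nat.le_add_right _ _)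
  have hfs0int : Integrable (fs 0) μ := hfint 0
  -- a.e. nonnegativity of Z at all times
  have hZall : ∀ᵐ ω ∂μ, ∀ k, 0 ≤ Z k ω := by
    rw [ae_all_iff]
    intro k
    filter_upwards [hZnonneg k] with ω hω using hω
  -- the key localized convergence statement
  have key : ∀ M : ℕ, ∀ᵐ ω ∂μ,
      (∀ j : ℕ, |S (n₁ + j + 1) ω| ≤ (M:ℝ)) →
        ∃ x, Tendsto (fun n => X n ω) atTop (𝓝 x) := by
    intro M
    set Eset : ℕ → Set Ω := fun k => {ω | ∀ j ≤ k, |S (n₁ + j + 1) ω| ≤ (M:ℝ)} with hEdef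
    set ξ : ℕ → Ω → ℝ := fun k => (Eset k).indicator (fun _ => (1:ℝ)) with hξdef
    have hEmeas : ∀ k, MeasurableSet[𝒢 k] (Eset k) := by
      intro k
      have hEeq : Eset k = ⋂ (j : ℕ) (_ : j ≤ k), {ω | |S (n₁ + j + 1) ω| ≤ (M:ℝ)} := by
        ext ω; simp [hEdef, Set.mem_iInter]
      rw [hEeq]
      refine MeasurableSet.iInter fun j => MeasurableSet.iInter fun hj => ?_
      have hsm : StronglyMeasurable[𝒢 k] (S (n₁ + j + 1)) :=
        hSsm (n₁ + k) (n₁ + j + 1) (by omega)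
      have hpre : {ω | |S (n₁ + j + 1) ω| ≤ (M:ℝ)}
          = S (n₁ + j + 1) ⁻¹' Set.Icc (-(M:ℝ)) (M:ℝ) := by
        ext ω
        simp [abs_le, Set.mem_Icc]
      rw [hpre]
      exact hsm.measurable measurableSet_Icc
    have hξadp : StronglyAdapted 𝒢 ξ := fun k => stronglyMeasurable_const.indicator (hEmeas k)
    have hξbdd : ∀ k ω, ξ k ω ≤ (1:ℝ) := by
      intro k ω
      simp only [hξdef]
      by_cases h : ω ∈ Eset k
      · rw [Set.indicator_of_mem h]
      · rw [Set.indicator_of_notMem h]; norm_num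
    have hξnonneg : ∀ k ω, 0 ≤ ξ k ω := by
      intro k ω
      simp only [hξdef]
      by_cases h : ω ∈ Eset k
      · rw [Set.indicator_of_mem h]; norm_num
      · rw [Set.indicator_of_notMem h]
    have hGsub : Submartingale
        (fun n => ∑ k ∈ Finset.range n, ξ k * ((-fs) (k+1) - (-fs) k)) 𝒢 μ :=
      hfsuper.neg.sum_mul_sub hξadp hξbdd hξnonneg
    set G : ℕ → Ω → ℝ := fun n => ∑ k ∈ Finset.range n, ξ k * ((-fs) (k+1) - (-fs) k)
      with hGdef
    have hGval : ∀ n ω, G n ω = ∑ k ∈ Finset.range n, ξ k ω * (fs k ω - fs (k+1) ω) := by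
      intro n ω
      simp only [hGdef, Finset.sum_apply, Pi.mul_apply, Pi.sub_apply, Pi.neg_apply, neg_sub_neg]
    have hGint : ∀ n, Integrable (G n) μ := fun n => hGsub.integrable n
    -- indicator values
    have hξval1 : ∀ ω k, (∀ j ≤ k, |S (n₁ + j + 1) ω| ≤ (M:ℝ)) → ξ k ω = 1 := by
      intro ω k h
      simp only [hξdef]
      exact Set.indicator_of_mem (show ω ∈ Eset k from h) _
    have hξval0 : ∀ ω k, ¬(∀ j ≤ k, |S (n₁ + j + 1) ω| ≤ (M:ℝ)) → ξ k ω = 0 := by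
      intro ω k h
      simp only [hξdef]
      exact Set.indicator_of_notMem (show ω ∉ Eset k from h) _
    -- a.e. upper bound on G
    have hGub : ∀ᵐ ω ∂μ, ∀ n, G n ω ≤ fs 0 ω + (M:ℝ) := by
      filter_upwards [hZall] with ω hZω
      intro n
      obtain ⟨i, hin, heq, hPi, -⟩ :=
        aux_stopped_rep (fun j => fs j ω) (fun j => |S (n₁ + j + 1) ω| ≤ (M:ℝ))
          (fun k => ξ k ω) (hξval1 ω) (hξval0 ω) n
      have hG : G n ω = fs 0 ω - fs i ω := by
        have h1 := hGval n ω
        have h2 : ∑ k ∈ Finset.range n, ξ k ω * (fs (k+1) ω - fs k ω)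
            = -∑ k ∈ Finset.range n, ξ k ω * (fs k ω - fs (k+1) ω) := by
          rw [← Finset.sum_neg_distrib]
          exact Finset.sum_congr rfl fun k _ => by ring
        rw [h2] at heq
        linarith [heq, h1]
      have hWnn : ∀ k, 1 ≤ k → 0 ≤ W k ω := by
        intro k hk
        have : (0:ℝ) ≤ (k:ℝ) - 1 := by
          have : (1:ℝ) ≤ (k:ℝ) := by exact_mod_cast hk
          linarith
        exact mul_nonneg (Real.rpow_nonneg this _) (hZω k)
      have hT0 : 0 ≤ T (n₁+i) ω := by
        refine Finset.sum_nonneg fun k hk => ?_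
        have hk1 : n₁ ≤ k := (Finset.mem_Ico.mp hk).1
        exact mul_nonneg (div_nonneg hεpos.le (by positivity)) (hWnn k (by omega))
      have hSb : |S (n₁+i) ω| ≤ (M:ℝ) := by
        rcases Nat.eq_zero_or_pos i with rfl | hi
        · have : S (n₁ + 0) ω = 0 := by simp [hSdef]
          rw [this]
          simp
        · have h := hPi (i-1) (by omega)
          have heqi : n₁ + (i-1) + 1 = n₁ + i := by omega
          rwa [heqi] at h
      have hfsival : fs i ω = W (n₁+i) ω - S (n₁+i) ω + T (n₁+i) ω := rfl
      have habs := abs_le.mp hSb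
      have hWi := hWnn (n₁+i) (by omega)
      rw [hG, hfsival] at *
      linarith [habs.1, habs.2]
    -- L¹ bound on G
    have hEG0 : ∫ ω, G 0 ω ∂μ = 0 := by
      have : G 0 = fun _ => (0:ℝ) := by
        funext ω; simp [hGval]
      rw [this]; simp
    have hEG : ∀ n, 0 ≤ ∫ ω, G n ω ∂μ := by
      intro n
      induction n with
      | zero => rw [hEG0]
      | succ n ih =>
        have hle := hGsub.2.1 n (n+1) (Nat.le_succ n)
        have hmono : ∫ ω, G n ω ∂μ ≤ ∫ ω, (μ[G (n+1)|𝒢 n]) ω ∂μ :=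
          integral_mono_ae (hGint n) integrable_condExp hle
        rw [integral_condExp (𝒢.le n)] at hmono
        linarith
    set B : ℝ := 2 * ∫ ω, |fs 0 ω| ∂μ + 2 * (M:ℝ) with hBdef
    have hEabs : ∀ n, ∫ ω, |G n ω| ∂μ ≤ B := by
      intro n
      have hptwise : ∀ᵐ ω ∂μ, |G n ω| + G n ω ≤ 2 * |fs 0 ω| + 2 * (M:ℝ) := by
        filter_upwards [hGub] with ω hω
        have h1 := hω n
        have h2 : G n ω ≤ |fs 0 ω| + (M:ℝ) := le_trans h1 (by
          have := le_abs_self (fs 0 ω); linarith)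
        rcases le_or_gt 0 (G n ω) with h | h
        · rw [abs_of_nonneg h]; linarith
        · rw [abs_of_neg h]
          have h3 : (0:ℝ) ≤ |fs 0 ω| := abs_nonneg _
          have h4 : (0:ℝ) ≤ (M:ℝ) := by positivity
          linarith
      have hintA : Integrable (fun ω => 2 * |fs 0 ω| + 2 * (M:ℝ)) μ :=
        (hfs0int.abs.const_mul 2).add (integrable_const _)
      have h1 : ∫ ω, (|G n ω| + G n ω) ∂μ ≤ ∫ ω, (2 * |fs 0 ω| + 2 * (M:ℝ)) ∂μ :=
        integral_mono_ae ((hGint n).abs.add (hGint n)) hintA hptwise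
      have h2 : ∫ ω, (|G n ω| + G n ω) ∂μ = ∫ ω, |G n ω| ∂μ + ∫ ω, G n ω ∂μ :=
        integral_add (hGint n).abs (hGint n)
      have h3 : ∫ ω, (2 * |fs 0 ω| + 2 * (M:ℝ)) ∂μ
          = ∫ ω, 2 * |fs 0 ω| ∂μ + ∫ ω, (2 * (M:ℝ)) ∂μ :=
        integral_add (hfs0int.abs.const_mul 2) (integrable_const _)
      have h4 : ∫ ω, 2 * |fs 0 ω| ∂μ = 2 * ∫ ω, |fs 0 ω| ∂μ := integral_const_mul 2 _
      have h5 : ∫ _ω, (2 * (M:ℝ)) ∂μ = 2 * (M:ℝ) := by simp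
      have h6 := hEG n
      rw [hBdef]
      linarith
    have hbdd : ∀ n, eLpNorm (G n) 1 μ ≤ ENNReal.ofReal B := by
      intro n
      rw [eLpNorm_one_eq_lintegral_enorm, ← ofReal_integral_norm_eq_lintegral_enorm (hGint n)]
      refine ENNReal.ofReal_le_ofReal ?_
      simpa [Real.norm_eq_abs] using hEabs n
    have hconv := hGsub.exists_ae_tendsto_of_bdd hbdd
    -- conclude pointwise
    filter_upwards [hconv] with ω hc hP
    obtain ⟨gl, hgl⟩ := hc
    have hfseq : ∀ n, fs n ω = fs 0 ω - G n ω := by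
      intro n
      obtain ⟨i, hin, heq, -, hfail⟩ :=
        aux_stopped_rep (fun j => fs j ω) (fun j => |S (n₁ + j + 1) ω| ≤ (M:ℝ))
          (fun k => ξ k ω) (hξval1 ω) (hξval0 ω) n
      have hieq : i = n := by
        by_contra h
        exact (hfail (lt_of_le_of_ne hin h)) (hP i)
      rw [hieq] at heq
      have h1 := hGval n ω
      have h2 : ∑ k ∈ Finset.range n, ξ k ω * (fs (k+1) ω - fs k ω)
          = -∑ k ∈ Finset.range n, ξ k ω * (fs k ω - fs (k+1) ω) := by
        rw [← Finset.sum_neg_distrib]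
        exact Finset.sum_congr rfl fun k _ => by ring
      rw [h2] at heq
      linarith [heq, h1]
    have hfst : Tendsto (fun n => fs n ω) atTop (𝓝 (fs 0 ω - gl)) := by
      refine (tendsto_const_nhds.sub hgl).congr fun n => ?_
      rw [← hfseq n]
    refine ⟨fs 0 ω - gl, ?_⟩
    have hshift : (fun i => X (i + n₁) ω) = fun i => fs i ω := by
      funext i
      simp only [hfsdef, Nat.add_comm]
    exact (tendsto_add_atTop_iff_nat n₁).mp (by rw [hshift]; exact hfst)
  -- assemble the almost-sure statement
  have keyall : ∀ᵐ ω ∂μ, ∀ M : ℕ,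
      (∀ j : ℕ, |S (n₁ + j + 1) ω| ≤ (M:ℝ)) →
        ∃ x, Tendsto (fun n => X n ω) atTop (𝓝 x) := ae_all_iff.mpr key
  filter_upwards [keyall, hcsum, hZall] with ω hkey hl hZω
  -- convergence of the partial sums S
  set A : ℕ → ℝ := fun N => ∑ k ∈ Finset.Icc 1 N, (k:ℝ) ^ β * c k ω with hAdef
  obtain ⟨l₀, hl₀⟩ := hl
  have hl₀' : Tendsto A atTop (𝓝 l₀) := hl₀
  have hA' : ∀ N, A N = ∑ k ∈ Finset.Ico 1 (N+1), d k ω := by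
    intro N
    rw [Finset.Ico_add_one_right_eq_Icc]
  have hSA : ∀ m, n₁ ≤ m → S m ω = A (m-1) - A (n₁-1) := by
    intro m hm
    have h1m : 1 ≤ m := le_trans hn₁1 hm
    have e1 : (m-1)+1 = m := by omega
    have e2 : (n₁-1)+1 = n₁ := by omega
    rw [hA' (m-1), hA' (n₁-1), e1, e2]
    have hcons := Finset.sum_Ico_consecutive (fun k => d k ω) hn₁1 hm
    have hSval : S m ω = ∑ k ∈ Finset.Ico n₁ m, d k ω := rfl
    rw [hSval]
    linarith
  have hSconv : Tendsto (fun m => S m ω) atTop (𝓝 (l₀ - A (n₁-1))) := by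
    have h1 : Tendsto (fun m : ℕ => A (m-1) - A (n₁-1)) atTop (𝓝 (l₀ - A (n₁-1))) :=
      (hl₀'.comp (tendsto_sub_atTop_nat 1)).sub_const _
    refine h1.congr' ?_
    filter_upwards [eventually_atTop.mpr ⟨n₁, fun m hm => hSA m hm⟩] with m hm
    rw [hm]
  set l : ℝ := l₀ - A (n₁-1) with hldef
  -- bound on |S| gives an M
  have habs : Tendsto (fun m => |S m ω|) atTop (𝓝 |l|) := hSconv.abs
  obtain ⟨b, hb⟩ := habs.bddAbove_range
  set M : ℕ := ⌈b⌉₊ with hMdef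
  have hMb : ∀ j : ℕ, |S (n₁ + j + 1) ω| ≤ (M:ℝ) := by
    intro j
    have h1 : |S (n₁ + j + 1) ω| ≤ b := hb (Set.mem_range_self _)
    exact h1.trans (Nat.le_ceil b)
  obtain ⟨x, hx⟩ := hkey M hMb
  -- convergence of W + T
  have hWT : Tendsto (fun n => W n ω + T n ω) atTop (𝓝 (x + l)) := by
    have h1 : Tendsto (fun n => X n ω + S n ω) atTop (𝓝 (x + l)) := hx.add hSconv
    refine h1.congr fun n => ?_
    have : X n ω = W n ω - S n ω + T n ω := rfl
    rw [this]; ring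
  have hWnn : ∀ k, 1 ≤ k → 0 ≤ W k ω := by
    intro k hk
    have h1 : (0:ℝ) ≤ (k:ℝ) - 1 := by
      have : (1:ℝ) ≤ (k:ℝ) := by exact_mod_cast hk
      linarith
    exact mul_nonneg (Real.rpow_nonneg h1 _) (hZω k)
  have hTmono : Monotone (fun n => T n ω) := by
    intro n m hnm
    refine Finset.sum_le_sum_of_subset_of_nonneg (Finset.Ico_subset_Ico le_rfl hnm) ?_
    intro k hk _
    have hk1 : n₁ ≤ k := (Finset.mem_Ico.mp hk).1
    exact mul_nonneg (div_nonneg hεpos.le (by positivity)) (hWnn k (by omega))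
  have hTbddA : BddAbove (Set.range fun n => T n ω) := by
    obtain ⟨B2, hB2⟩ := hWT.bddAbove_range
    refine ⟨max B2 0, ?_⟩
    rintro y ⟨n, rfl⟩
    rcases Nat.eq_zero_or_pos n with rfl | hn
    · show T 0 ω ≤ max B2 0
      have hT00 : T 0 ω = 0 := by
        have he : Finset.Ico n₁ 0 = ∅ := by
          rw [Finset.Ico_eq_empty_iff]
          omega
        simp [hTdef, he]
      rw [hT00]
      exact le_max_right _ _
    · show T n ω ≤ max B2 0
      have h1 : T n ω ≤ W n ω + T n ω := by
        have := hWnn n hn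
        linarith
      exact le_trans (h1.trans (hB2 (Set.mem_range_self n))) (le_max_left _ _)
  have hTconv : Tendsto (fun n => T n ω) atTop (𝓝 (⨆ n, T n ω)) :=
    tendsto_atTop_ciSup hTmono hTbddA
  set t : ℝ := ⨆ n, T n ω with htdef
  have hWlim : Tendsto (fun n => W n ω) atTop (𝓝 (x + l - t)) := by
    refine ((hWT.sub hTconv).congr fun n => ?_)
    ring
  set L : ℝ := x + l - t with hLdef
  have hLnn : 0 ≤ L := by
    refine ge_of_tendsto hWlim ?_
    filter_upwards [eventually_atTop.mpr ⟨1, fun n hn => hWnn n hn⟩] with n hn using hn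
  have hLzero : L = 0 := by
    by_contra hne
    have hLpos : 0 < L := lt_of_le_of_ne hLnn (Ne.symm hne)
    obtain ⟨N, hN⟩ := eventually_atTop.mp (hWlim.eventually (eventually_gt_nhds
      (by linarith : L/2 < L)))
    set N' : ℕ := max N n₁ with hN'def
    have hN'1 : 1 ≤ N' := le_trans hn₁1 (le_max_right _ _)
    obtain ⟨B2, hB2⟩ := hWT.bddAbove_range
    set u : ℕ → ℝ := fun i => ε/(4*((N'+i:ℕ):ℝ)) * W (N'+i) ω with hudef
    have hu0 : ∀ i, 0 ≤ u i := by
      intro i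
      exact mul_nonneg (div_nonneg hεpos.le (by positivity)) (hWnn (N'+i) (by omega))
    have husum : Summable u := by
      refine summable_of_sum_range_le hu0 (fun n => ?_) (c := max B2 0)
      have he : ∑ i ∈ Finset.range n, u i
          = ∑ k ∈ Finset.Ico N' (N'+n), ε/(4*(k:ℝ)) * W k ω := by
        rw [Finset.sum_Ico_eq_sum_range]
        simp [hudef]
      rw [he]
      have hsub : ∑ k ∈ Finset.Ico N' (N'+n), ε/(4*(k:ℝ)) * W k ω
          ≤ ∑ k ∈ Finset.Ico n₁ (N'+n), ε/(4*(k:ℝ)) * W k ω := by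
        refine Finset.sum_le_sum_of_subset_of_nonneg
          (Finset.Ico_subset_Ico (le_max_right _ _) le_rfl) ?_
        intro k hk _
        have hk1 : n₁ ≤ k := (Finset.mem_Ico.mp hk).1
        exact mul_nonneg (div_nonneg hεpos.le (by positivity)) (hWnn k (by omega))
      have hTval : ∑ k ∈ Finset.Ico n₁ (N'+n), ε/(4*(k:ℝ)) * W k ω = T (N'+n) ω := rfl
      have h1 : T (N'+n) ω ≤ W (N'+n) ω + T (N'+n) ω := by
        have := hWnn (N'+n) (by omega)
        linarith
      have h2 := hB2 (Set.mem_range_self (N'+n))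
      calc ∑ k ∈ Finset.Ico N' (N'+n), ε/(4*(k:ℝ)) * W k ω
          ≤ T (N'+n) ω := by rw [← hTval]; exact hsub
        _ ≤ B2 := h1.trans h2
        _ ≤ max B2 0 := le_max_left _ _
    have hcmp : Summable (fun i : ℕ => ε*L/8 * (1/((N'+i:ℕ):ℝ))) := by
      refine Summable.of_nonneg_of_le (fun i => by positivity) (fun i => ?_) husum
      have hk0 : (0:ℝ) < ((N'+i:ℕ):ℝ) := by
        have : 1 ≤ N' + i := by omega
        exact_mod_cast Nat.lt_of_lt_of_le Nat.zero_lt_one this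
      have heqq : ε*L/8 * (1/((N'+i:ℕ):ℝ)) = ε/(4*((N'+i:ℕ):ℝ)) * (L/2) := by
        field_simp
        ring
      rw [heqq, hudef]
      refine mul_le_mul_of_nonneg_left ?_ (div_nonneg hεpos.le (by positivity))
      have hNle : N ≤ N' + i := le_trans (le_max_left N n₁) (Nat.le_add_right N' i)
      exact (hN (N'+i) hNle).le
    have hsum1 : Summable (fun i : ℕ => 1/((N'+i:ℕ):ℝ)) := by
      have hne : ε*L/8 ≠ 0 := by positivity
      exact (summable_mul_left_iff hne).mp hcmp
    have hsum2 : Summable (fun i : ℕ => 1/((i + N':ℕ):ℝ)) := by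
      refine hsum1.congr fun i => ?_
      rw [Nat.add_comm]
    have hsum3 : Summable (fun n : ℕ => 1/(n:ℝ)) :=
      (summable_nat_add_iff N').mp hsum2
    exact Real.not_summable_one_div_natCast hsum3
  have hW0 : Tendsto (fun n => W n ω) atTop (𝓝 0) := hLzero ▸ hWlim
  -- final squeeze
  have hup : ∀ᶠ n : ℕ in atTop, (n:ℝ) ^ β * Z n ω ≤ 2 ^ β * W n ω := by
    filter_upwards [eventually_atTop.mpr ⟨2, fun n hn => hn⟩] with n hn
    have h2n : (2:ℝ) ≤ (n:ℝ) := by exact_mod_cast hn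
    have h1 : (1:ℝ) ≤ (n:ℝ) - 1 := by linarith
    have hle : (n:ℝ) ≤ 2 * ((n:ℝ)-1) := by linarith
    have hr : (n:ℝ) ^ β ≤ (2*((n:ℝ)-1)) ^ β :=
      Real.rpow_le_rpow (by positivity) hle hβ0.le
    have hmul : (2*((n:ℝ)-1)) ^ β = 2 ^ β * ((n:ℝ)-1) ^ β :=
      Real.mul_rpow (by norm_num) (by linarith)
    have hWval : W n ω = ((n:ℝ)-1) ^ β * Z n ω := rfl
    rw [hWval]
    calc (n:ℝ) ^ β * Z n ω ≤ (2 ^ β * ((n:ℝ)-1) ^ β) * Z n ω := by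
          refine mul_le_mul_of_nonneg_right ?_ (hZω n)
          rw [← hmul]; exact hr
      _ = 2 ^ β * (((n:ℝ)-1) ^ β * Z n ω) := by ring
  have hlow : ∀ᶠ n : ℕ in atTop, 0 ≤ (n:ℝ) ^ β * Z n ω := by
    filter_upwards with n
    exact mul_nonneg (Real.rpow_nonneg (by positivity) _) (hZω n)
  have hg0 : Tendsto (fun n => 2 ^ β * W n ω) atTop (𝓝 0) := by
    have := hW0.const_mul (2 ^ β : ℝ)
    simpa using this
  exact squeeze_zero' hlow hup hg0
end
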